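/- arXiv:1805.05253 — 3 statements merged into one kernel-verified Lean document; each statement's English description precedes it below -/
import Mathlib

section
/- For each n ≥ 1 let p_n be a probability measure on the symmetric group S_n that is invariant under conjugation, and assume p_n({σ : σ(1)=1}) → 0 as n → ∞. Then for every finite set A of positive integers, lim_{n→∞} p_n({σ : A ⊆ D(σ)}) = det([k_0(j−i)]_{i,j ∈ A}), where k_0 : ℤ → ℚ is defined by k_0(l) = −B_{l+1}/(l+1)! for l ≥ −1 and k_0(l) = 0 for l ≤ −2, with B_m the Bernoulli numbers normalized so that B_0 = 1 and B_1 = −1/2. -/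
noncomputable section

def descentAt {n : ℕ} (σ : Equiv.Perm (Fin n)) (i : ℕ) : Prop :=
  ∃ (h1 : i - 1 < n) (h2 : i < n), σ ⟨i, h2⟩ < σ ⟨i - 1, h1⟩

def permProb {n : ℕ} (p : Equiv.Perm (Fin n) → ℝ) (P : Equiv.Perm (Fin n) → Prop) : ℝ :=
  ∑ σ, Set.indicator {σ' | P σ'} p σ

def k0 (l : ℤ) : ℚ :=
  if -1 ≤ l then -(bernoulli (l + 1).toNat) / ((l + 1).toNat.factorial : ℚ) else 0

open Finset Equiv BigOperators

open scoped Classical in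
/-- number of permutations of `Fin N` with descents at all elements of `A`. -/
def cnt (N : ℕ) (A : Finset ℕ) : ℕ :=
  (Finset.univ.filter fun w : Equiv.Perm (Fin N) => ∀ a ∈ A, descentAt w a).card

lemma k0_neg {l : ℤ} (h : l ≤ -2) : k0 l = 0 := by
  rw [k0, if_neg]; omega

lemma k0_negone : k0 (-1) = -1 := by
  rw [k0, if_pos (by norm_num)]
  norm_num

lemma k0_nat (d : ℕ) : k0 d = -(bernoulli (d+1)) / ((d+1).factorial : ℚ) := by
  have h : ((d:ℤ)+1).toNat = d+1 := by omega
  rw [k0, if_pos (by omega), h]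

lemma BL (k : ℕ) : ∑ d ∈ range (k+1), k0 d / ((k+1-d).factorial : ℚ)
    = 1 / ((k+2).factorial : ℚ) := by
  have h2 : ∑ d ∈ range (k+1), ((k+2).choose (d+1) : ℚ) * bernoulli (d+1) = -1 := by
    have h := sum_bernoulli (k+2)
    rw [if_neg (by omega)] at h
    rw [Finset.sum_range_succ'] at h
    simp only [Nat.choose_zero_right, Nat.cast_one, bernoulli_zero, one_mul] at h
    linarith
  have key : ∀ d ∈ range (k+1), k0 d / ((k+1-d).factorial : ℚ)
      = -(((k+2).choose (d+1) : ℚ) * bernoulli (d+1)) / ((k+2).factorial : ℚ) := by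
    intro d hd
    rw [mem_range] at hd
    rw [k0_nat]
    have hch : ((k+2).choose (d+1)) * (d+1).factorial * ((k+1-d).factorial) = (k+2).factorial := by
      have := Nat.choose_mul_factorial_mul_factorial (n := k+2) (k := d+1) (by omega)
      have he : k + 2 - (d+1) = k+1-d := by omega
      rw [he] at this
      exact this
    have h1 : ((d+1).factorial : ℚ) ≠ 0 := by positivity
    have h2 : ((k+1-d).factorial : ℚ) ≠ 0 := by positivity
    have h3 : ((k+2).factorial : ℚ) ≠ 0 := by positivity
    have hchQ : ((k+2).factorial : ℚ)
        = ((k+2).choose (d+1) : ℚ) * ((d+1).factorial : ℚ) * ((k+1-d).factorial : ℚ) := by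
      rw [← hch]; push_cast; ring
    rw [div_div, div_eq_div_iff (by positivity) h3]
    linear_combination (-(bernoulli (d+1))) * hchQ
  rw [Finset.sum_congr rfl key, ← Finset.sum_div]
  have h3 : ∑ i ∈ range (k+1), -(((k+2).choose (i+1) : ℚ) * bernoulli (i+1)) = 1 := by
    rw [Finset.sum_neg_distrib, h2]; norm_num
  rw [h3]


def Tmat (k : ℕ) : Matrix (Fin k) (Fin k) ℚ :=
  Matrix.of fun i j => k0 ((j:ℤ) - (i:ℤ))

def Emat (k : ℕ) (t : ℕ) : Matrix (Fin (k+1)) (Fin (k+1)) ℚ :=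
  Matrix.of fun i j => if (j:ℕ) = k then k0 ((t:ℤ) + (k:ℤ) - (i:ℤ)) else k0 ((j:ℤ) - (i:ℤ))

lemma Tmat_succ_eq_Emat (k : ℕ) : Tmat (k+1) = Emat k 0 := by
  ext i j
  simp only [Tmat, Emat, Matrix.of_apply]
  by_cases h : (j:ℕ) = k
  · rw [if_pos h]; congr 1; omega
  · rw [if_neg h]

lemma Edet : ∀ (k : ℕ) (t : ℕ), (Emat k t).det
    = ∑ d ∈ range (k+1), k0 ((t:ℤ)+(d:ℤ)) / ((k-d+1).factorial : ℚ) := by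
  intro k
  induction k with
  | zero =>
    intro t
    simp [Emat, Matrix.det_fin_one, Matrix.of_apply]
  | succ k ih =>
    intro t
    rw [Matrix.det_succ_row (Emat (k+1) t) (Fin.last (k+1))]
    rw [Fin.sum_univ_castSucc, Fin.sum_univ_castSucc]
    have hzero : ∀ j : Fin k,
        (-1:ℚ) ^ (((Fin.last (k+1)) : ℕ) + (((j.castSucc).castSucc : Fin (k+2)) : ℕ))
          * Emat (k+1) t (Fin.last (k+1)) ((j.castSucc).castSucc)
          * ((Emat (k+1) t).submatrix (Fin.last (k+1)).succAbove
              ((j.castSucc).castSucc).succAbove).det = 0 := by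
      intro j
      have hj : (((j.castSucc).castSucc : Fin (k+2)) : ℕ) = (j:ℕ) := rfl
      have hjk : (j : ℕ) < k := j.isLt
      have hent : Emat (k+1) t (Fin.last (k+1)) ((j.castSucc).castSucc) = 0 := by
        simp only [Emat, Matrix.of_apply, hj]
        rw [if_neg (by omega)]
        apply k0_neg
        simp only [Fin.val_last]
        push_cast [hj]
        omega
      rw [hent]; ring
    rw [Finset.sum_congr rfl (fun j _ => hzero j), Finset.sum_const_zero]
    have hM1 : (Emat (k+1) t).submatrix (Fin.last (k+1)).succAbove
        (((Fin.last k).castSucc : Fin (k+2)).succAbove) = Emat k (t+1) := by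
      ext i j
      have hrow : (Fin.last (k+1)).succAbove i = i.castSucc := by
        rw [Fin.succAbove_last]
      by_cases hjk : (j : ℕ) = k
      · have hcol : ((Fin.last k).castSucc : Fin (k+2)).succAbove j = j.succ := by
          apply Fin.succAbove_of_le_castSucc
          simp [Fin.le_def, hjk]
        simp only [Matrix.submatrix_apply, hrow, hcol, Emat, Matrix.of_apply]
        rw [if_pos (by simp [Fin.val_succ, hjk]), if_pos hjk]
        congr 1
        simp [Fin.val_succ, hjk]
        push_cast
        ring
      · have hcol : ((Fin.last k).castSucc : Fin (k+2)).succAbove j = j.castSucc := by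
          apply Fin.succAbove_of_castSucc_lt
          simp only [Fin.lt_def, Fin.coe_castSucc, Fin.val_last]
          omega
        simp only [Matrix.submatrix_apply, hrow, hcol, Emat, Matrix.of_apply]
        rw [if_neg (by simp only [Fin.coe_castSucc]; omega), if_neg hjk]
        simp [Fin.coe_castSucc]
    have hM2 : (Emat (k+1) t).submatrix (Fin.last (k+1)).succAbove
        (Fin.last (k+1)).succAbove = Emat k 0 := by
      ext i j
      have hjk : (j:ℕ) < k + 1 := j.isLt
      simp only [Matrix.submatrix_apply, Fin.succAbove_last, Emat, Matrix.of_apply,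
        Fin.coe_castSucc]
      rw [if_neg (by omega)]
      by_cases h : (j:ℕ) = k
      · rw [if_pos h]; congr 1; push_cast [h]; ring
      · rw [if_neg h]
    have hentm : Emat (k+1) t (Fin.last (k+1)) ((Fin.last k).castSucc) = -1 := by
      simp only [Emat, Matrix.of_apply, Fin.coe_castSucc, Fin.val_last]
      rw [if_neg (by omega)]
      convert k0_negone using 2
      omega
    have hentl : Emat (k+1) t (Fin.last (k+1)) (Fin.last (k+1)) = k0 t := by
      simp only [Emat, Matrix.of_apply]
      rw [if_pos (show ((Fin.last (k+1)):ℕ) = k+1 from rfl)]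
      congr 1
      simp only [Fin.val_last]
      push_cast
      ring
    have hsign1 : (-1:ℚ) ^ (((Fin.last (k+1)):ℕ) + (((Fin.last k).castSucc : Fin (k+2)):ℕ))
        = -1 := by
      simp only [Fin.val_last, Fin.coe_castSucc]
      rw [show (k+1) + k = 2*k+1 by ring, pow_succ, pow_mul]
      norm_num
    have hsign2 : (-1:ℚ) ^ (((Fin.last (k+1)):ℕ) + ((Fin.last (k+1)):ℕ)) = 1 := by
      simp only [Fin.val_last]
      rw [show (k+1) + (k+1) = 2*(k+1) by ring, pow_mul]
      norm_num
    rw [hM1, hM2, hentm, hentl, hsign1, hsign2, ih (t+1), ih 0]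
    have hE0 : ∑ d ∈ range (k+1), k0 (((0:ℕ):ℤ)+(d:ℤ)) / ((k-d+1).factorial : ℚ)
        = 1 / ((k+2).factorial : ℚ) := by
      rw [← BL k]
      apply Finset.sum_congr rfl
      intro d hd
      rw [mem_range] at hd
      have h0 : ((0:ℕ):ℤ) + (d:ℤ) = (d:ℤ) := by push_cast; ring
      rw [h0, show k - d + 1 = k + 1 - d by omega]
    rw [hE0]
    conv_rhs => rw [Finset.sum_range_succ']
    have hfirst : k0 ((t:ℤ) + ((0:ℕ):ℤ)) / (((k+1) - 0 + 1).factorial : ℚ)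
        = k0 (t:ℤ) / ((k+2).factorial : ℚ) := by
      norm_num
    rw [hfirst]
    have hrest : ∀ d ∈ range (k+1), k0 ((t:ℤ) + ((d+1:ℕ):ℤ)) / (((k+1) - (d+1) + 1).factorial : ℚ)
        = k0 (((t+1:ℕ):ℤ) + (d:ℤ)) / ((k - d + 1).factorial : ℚ) := by
      intro d hd
      rw [mem_range] at hd
      have e1 : (k+1) - (d+1) + 1 = k - d + 1 := by omega
      have e2 : (t:ℤ) + ((d+1:ℕ):ℤ) = ((t+1:ℕ):ℤ) + (d:ℤ) := by push_cast; ring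
      rw [e1, e2]
    rw [Finset.sum_congr rfl hrest]
    ring

lemma Tdet (k : ℕ) : (Tmat k).det = 1 / ((k+1).factorial : ℚ) := by
  cases k with
  | zero => simp [Tmat]
  | succ k =>
    rw [Tmat_succ_eq_Emat, Edet k 0, ← BL k]
    apply Finset.sum_congr rfl
    intro d hd
    rw [mem_range] at hd
    have h0 : ((0:ℕ):ℤ) + (d:ℤ) = (d:ℤ) := by push_cast; ring
    rw [h0, show k - d + 1 = k + 1 - d by omega]

/-- the kernel matrix indexed by a finset -/
def MatK (S : Finset ℕ) : Matrix S S ℚ :=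
  Matrix.of fun i j => k0 (((j:ℕ):ℤ) - ((i:ℕ):ℤ))

lemma det_run (c r : ℕ) : (MatK (Finset.Icc (c+1) (c+r))).det = (Tmat r).det := by
  let e : Fin r ≃ ↥(Finset.Icc (c+1) (c+r)) :=
    { toFun := fun y => ⟨c+1+y, by rw [Finset.mem_Icc]; omega⟩
      invFun := fun x => ⟨(x:ℕ) - (c+1), by
        have := x.2; rw [Finset.mem_Icc] at this; omega⟩
      left_inv := by intro y; ext; simp
      right_inv := by
        intro x
        have := x.2; rw [Finset.mem_Icc] at this
        ext; simp; omega }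
  rw [← Matrix.det_submatrix_equiv_self e (MatK _)]
  congr 1
  ext i j
  show k0 _ = k0 _
  congr 1
  show ((e j : ℕ) : ℤ) - ((e i : ℕ) : ℤ) = (j:ℤ) - (i:ℤ)
  simp only [e, Equiv.coe_fn_mk]
  push_cast
  ring

lemma det_block (B R : Finset ℕ) (hd : ∀ b ∈ B, ∀ a ∈ R, b + 2 ≤ a) :
    (MatK (B ∪ R)).det = (MatK B).det * (MatK R).det := by
  classical
  have hdisj : ∀ x : ℕ, x ∈ R → x ∉ B := fun x hR hB => by have := hd x hB x hR; omega
  let e : (↥B ⊕ ↥R) ≃ ↥(B ∪ R) :=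
    { toFun := fun x => match x with
        | Sum.inl b => ⟨b.1, Finset.mem_union_left _ b.2⟩
        | Sum.inr a => ⟨a.1, Finset.mem_union_right _ a.2⟩
      invFun := fun x => if h : (x:ℕ) ∈ B then Sum.inl ⟨x, h⟩
        else Sum.inr ⟨x, (Finset.mem_union.1 x.2).resolve_left h⟩
      left_inv := by
        rintro (b|a)
        · simp [b.2]
        · simp [hdisj a.1 a.2]
      right_inv := by
        intro x
        by_cases h : (x:ℕ) ∈ B <;> simp [h] }
  rw [← Matrix.det_submatrix_equiv_self e (MatK _)]
  have hsub : (MatK (B ∪ R)).submatrix e e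
      = Matrix.fromBlocks (MatK B) (Matrix.of fun (i : ↥B) (j : ↥R) => k0 (((j:ℕ):ℤ) - ((i:ℕ):ℤ)))
          0 (MatK R) := by
    ext i j
    rcases i with (i|i) <;> rcases j with (j|j) <;>
      simp only [Matrix.submatrix_apply, MatK, Matrix.of_apply,
        Matrix.fromBlocks_apply₁₁, Matrix.fromBlocks_apply₁₂, Matrix.fromBlocks_apply₂₁,
        Matrix.fromBlocks_apply₂₂, Matrix.zero_apply] <;>
      first
        | rfl
        | (have hk := hd j.1 j.2 i.1 i.2
           show k0 (((j:ℕ):ℤ) - ((i:ℕ):ℤ)) = 0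
           apply k0_neg
           omega)
  rw [hsub, Matrix.det_fromBlocks_zero₂₁]

section RunLemmas

variable {N c r : ℕ}

def winG (c : ℕ) {r N : ℕ} (h : c + r < N) (y : Fin (r+1)) : Fin N :=
  ⟨c + y, by have := y.isLt; omega⟩

lemma winG_inj (h : c + r < N) : Function.Injective (winG c h) := by
  intro a b hab
  have : c + (a:ℕ) = c + (b:ℕ) := congrArg Fin.val hab
  exact Fin.ext (by omega)

def winS (c : ℕ) {r N : ℕ} (h : c + r < N) (w : Equiv.Perm (Fin N)) : Finset (Fin N) :=
  Finset.image (fun y => w (winG c h y)) Finset.univ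

lemma winS_inj (h : c + r < N) (w : Equiv.Perm (Fin N)) :
    Function.Injective (fun y => w (winG c h y)) := by
  intro a b hab
  exact winG_inj h (w.injective hab)

lemma winS_card (h : c + r < N) (w : Equiv.Perm (Fin N)) : (winS c h w).card = r + 1 := by
  rw [winS, Finset.card_image_of_injective _ (winS_inj h w), Finset.card_univ,
    Fintype.card_fin]

lemma winS_mem (h : c + r < N) (w : Equiv.Perm (Fin N)) (y : Fin (r+1)) :
    w (winG c h y) ∈ winS c h w :=
  Finset.mem_image.2 ⟨y, Finset.mem_univ y, rfl⟩

def winD (c : ℕ) {r N : ℕ} (h : c + r < N) (w : Equiv.Perm (Fin N)) (x : Fin (r+1)) : Fin N :=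
  (winS c h w).orderEmbOfFin (winS_card h w) x.rev

lemma winD_anti (h : c + r < N) (w : Equiv.Perm (Fin N)) : StrictAnti (winD c h w) := by
  intro a b hab
  exact ((winS c h w).orderEmbOfFin (winS_card h w)).strictMono (Fin.rev_lt_rev.2 hab)

lemma winD_mem (h : c + r < N) (w : Equiv.Perm (Fin N)) (x : Fin (r+1)) :
    winD c h w x ∈ winS c h w :=
  Finset.orderEmbOfFin_mem _ _ _

lemma orderEmbOfFin_congr {α : Type*} [LinearOrder α] {S S' : Finset α} (hSS : S = S')
    {k : ℕ} (h : S.card = k) (h' : S'.card = k) : S.orderEmbOfFin h = S'.orderEmbOfFin h' := by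
  subst hSS; rfl

lemma winD_congr (h : c + r < N) {w w' : Equiv.Perm (Fin N)}
    (hS : winS c h w = winS c h w') : winD c h w = winD c h w' := by
  funext x
  rw [winD, winD, orderEmbOfFin_congr hS (winS_card h w) (winS_card h w')]

/-- the unique decreasing enumeration property -/
lemma winD_unique (h : c + r < N) (w : Equiv.Perm (Fin N))
    (hanti : StrictAnti (fun y => w (winG c h y))) :
    ∀ x, w (winG c h x) = winD c h w x := by
  have hmono : StrictMono (fun x : Fin (r+1) => w (winG c h x.rev)) := by
    intro a b hab
    exact hanti (Fin.rev_lt_rev.2 hab)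
  have hmem : ∀ x : Fin (r+1), w (winG c h x.rev) ∈ winS c h w := fun x => winS_mem h w _
  have := Finset.orderEmbOfFin_unique (winS_card h w) hmem hmono
  intro x
  have hx := congrFun this x.rev
  simp only [Fin.rev_rev] at hx
  rw [winD]
  exact hx

def winEquivV (c : ℕ) {r N : ℕ} (h : c + r < N) (w : Equiv.Perm (Fin N)) :
    Fin (r+1) ≃ ↥(winS c h w) :=
  Equiv.ofBijective (fun y => ⟨w (winG c h y), winS_mem h w y⟩) (by
    rw [Fintype.bijective_iff_injective_and_card]
    constructor
    · intro a b hab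
      exact winS_inj h w (congrArg Subtype.val hab)
    · rw [Fintype.card_coe, winS_card h w, Fintype.card_fin])

def winEquivD (c : ℕ) {r N : ℕ} (h : c + r < N) (w : Equiv.Perm (Fin N)) :
    Fin (r+1) ≃ ↥(winS c h w) :=
  Equiv.ofBijective (fun x => ⟨winD c h w x, winD_mem h w x⟩) (by
    rw [Fintype.bijective_iff_injective_and_card]
    constructor
    · intro a b hab
      exact (winD_anti h w).injective (congrArg Subtype.val hab)
    · rw [Fintype.card_coe, winS_card h w, Fintype.card_fin])

def winPat (c : ℕ) {r N : ℕ} (h : c + r < N) (w : Equiv.Perm (Fin N)) :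
    Equiv.Perm (Fin (r+1)) :=
  (winEquivV c h w).trans (winEquivD c h w).symm

lemma winPat_spec (h : c + r < N) (w : Equiv.Perm (Fin N)) (y : Fin (r+1)) :
    winD c h w (winPat c h w y) = w (winG c h y) := by
  have h1 := (winEquivD c h w).apply_symm_apply (winEquivV c h w y)
  have h2 := congrArg Subtype.val h1
  exact h2

def winF (c : ℕ) {r N : ℕ} (h : c + r < N) :
    Fin (r+1) ≃ {x : Fin N // c ≤ (x:ℕ) ∧ (x:ℕ) ≤ c + r} where
  toFun y := ⟨winG c h y, by
    constructor
    · exact Nat.le_add_right c y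
    · have := y.isLt; show c + (y:ℕ) ≤ c + r; omega⟩
  invFun x := ⟨(x.1:ℕ) - c, by have := x.2; omega⟩
  left_inv y := by
    ext
    show c + (y:ℕ) - c = (y:ℕ)
    omega
  right_inv x := by
    ext
    show c + ((x.1:ℕ) - c) = (x.1:ℕ)
    have := x.2
    omega

def winPerm (c : ℕ) {r N : ℕ} (h : c + r < N) (π : Equiv.Perm (Fin (r+1))) :
    Equiv.Perm (Fin N) :=
  π.extendDomain (winF c h)

lemma winPerm_g (h : c + r < N) (π : Equiv.Perm (Fin (r+1))) (y : Fin (r+1)) :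
    winPerm c h π (winG c h y) = winG c h (π y) :=
  Equiv.Perm.extendDomain_apply_image π (winF c h) y

lemma winPerm_out (h : c + r < N) (π : Equiv.Perm (Fin (r+1))) (x : Fin N)
    (hx : (x:ℕ) < c ∨ c + r < (x:ℕ)) : winPerm c h π x = x :=
  Equiv.Perm.extendDomain_apply_not_subtype π (winF c h) (by
    rintro ⟨h1, h2⟩
    omega)

lemma winPerm_mul (h : c + r < N) (π π' : Equiv.Perm (Fin (r+1))) :
    winPerm c h π * winPerm c h π' = winPerm c h (π * π') :=
  Equiv.Perm.extendDomain_mul _ _ _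

lemma winPerm_inv (h : c + r < N) (π : Equiv.Perm (Fin (r+1))) :
    (winPerm c h π)⁻¹ = winPerm c h π⁻¹ :=
  Equiv.Perm.extendDomain_inv _ _

end RunLemmas

section RunMain

variable {N c r : ℕ}

lemma winPerm_one (h : c + r < N) : winPerm c h 1 = 1 :=
  Equiv.Perm.extendDomain_one _

lemma apply_low (h : c + r < N) (w : Equiv.Perm (Fin N)) (π : Equiv.Perm (Fin (r+1)))
    (x : Fin N) (hx : (x:ℕ) < c) : (w * winPerm c h π) x = w x := by
  rw [Equiv.Perm.mul_apply, winPerm_out h π x (Or.inl hx)]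

lemma desc_untouched (h : c + r < N) (w : Equiv.Perm (Fin N)) (π : Equiv.Perm (Fin (r+1)))
    (a : ℕ) (ha : a < c) :
    descentAt (w * winPerm c h π) a ↔ descentAt w a := by
  unfold descentAt
  constructor <;> rintro ⟨h1, h2, hlt⟩ <;> refine ⟨h1, h2, ?_⟩
  · rwa [apply_low h w π _ (by simpa using ha), apply_low h w π _ (by simp; omega)] at hlt
  · rw [apply_low h w π _ (by simpa using ha), apply_low h w π _ (by simp; omega)]
    exact hlt

lemma desc_window (h : c + r < N) (u : Equiv.Perm (Fin N)) :
    (∀ a ∈ Finset.Icc (c+1) (c+r), descentAt u a) ↔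
      StrictAnti (fun y : Fin (r+1) => u (winG c h y)) := by
  rw [Fin.strictAnti_iff_succ_lt]
  constructor
  · intro hd y
    obtain ⟨h1, h2, hlt⟩ := hd (c + 1 + (y:ℕ)) (by rw [Finset.mem_Icc]; have := y.isLt; omega)
    have e1 : (⟨c+1+(y:ℕ), h2⟩ : Fin N) = winG c h y.succ := by
      apply Fin.ext
      show c+1+(y:ℕ) = c + ((y:ℕ)+1)
      omega
    have e2 : (⟨c+1+(y:ℕ)-1, h1⟩ : Fin N) = winG c h y.castSucc := by
      apply Fin.ext
      show c+1+(y:ℕ)-1 = c + (y:ℕ)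
      omega
    rwa [e1, e2] at hlt
  · intro hs a ha
    rw [Finset.mem_Icc] at ha
    refine ⟨by omega, by omega, ?_⟩
    have hy := hs ⟨a - c - 1, by omega⟩
    have e1 : winG c h (⟨a - c - 1, by omega⟩ : Fin r).succ = ⟨a, by omega⟩ := by
      apply Fin.ext
      show c + (a - c - 1 + 1) = a
      omega
    have e2 : winG c h (⟨a - c - 1, by omega⟩ : Fin r).castSucc = ⟨a - 1, by omega⟩ := by
      apply Fin.ext
      show c + (a - c - 1) = a - 1
      omega
    rwa [e1, e2] at hy

open scoped Classical in
lemma cnt_union_run (N c r : ℕ) (hr : 1 ≤ r) (hcr : c + r < N) (B : Finset ℕ)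
    (hB : ∀ b ∈ B, b < c) :
    cnt N (B ∪ Finset.Icc (c+1) (c+r)) * (r+1).factorial = cnt N B := by
  unfold cnt
  have hcardP : (r+1).factorial = Fintype.card (Equiv.Perm (Fin (r+1))) := by
    rw [Fintype.card_perm, Fintype.card_fin]
  rw [hcardP, ← Finset.card_univ (α := Equiv.Perm (Fin (r+1))), ← Finset.card_product]
  apply Finset.card_bij'
    (i := fun (uπ : Equiv.Perm (Fin N) × Equiv.Perm (Fin (r+1))) _ =>
      uπ.1 * winPerm c hcr uπ.2)
    (j := fun w _ => (w * winPerm c hcr (winPat c hcr w)⁻¹, winPat c hcr w))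
  -- hi : maps into filter B
  · rintro ⟨u, π⟩ huπ
    rw [Finset.mem_product, Finset.mem_filter] at huπ
    rw [Finset.mem_filter]
    refine ⟨Finset.mem_univ _, ?_⟩
    intro b hb
    rw [desc_untouched hcr u π b (hB b hb)]
    exact huπ.1.2 b (Finset.mem_union_left _ hb)
  -- hj : maps into product
  · intro w hw
    rw [Finset.mem_filter] at hw
    rw [Finset.mem_product, Finset.mem_filter]
    refine ⟨⟨Finset.mem_univ _, ?_⟩, Finset.mem_univ _⟩
    intro a ha
    rcases Finset.mem_union.1 ha with hab | har
    · rw [desc_untouched hcr w _ a (hB a hab)]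
      exact hw.2 a hab
    · -- window part : decreasing
      have hdec : ∀ y, (w * winPerm c hcr (winPat c hcr w)⁻¹) (winG c hcr y)
          = winD c hcr w y := by
        intro y
        rw [Equiv.Perm.mul_apply, winPerm_g hcr _ y,
          ← winPat_spec hcr w ((winPat c hcr w)⁻¹ y),
          (by rw [← Equiv.Perm.mul_apply, mul_inv_cancel, Equiv.Perm.one_apply] :
            (winPat c hcr w) ((winPat c hcr w)⁻¹ y) = y)]
      have hanti : StrictAnti (fun y : Fin (r+1) =>
          (w * winPerm c hcr (winPat c hcr w)⁻¹) (winG c hcr y)) := by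
        have : (fun y : Fin (r+1) => (w * winPerm c hcr (winPat c hcr w)⁻¹) (winG c hcr y))
            = winD c hcr w := funext hdec
        rw [this]
        exact winD_anti hcr w
      exact (desc_window hcr _).2 hanti a har
  -- left inverse : j (i (u, π)) = (u, π)
  · rintro ⟨u, π⟩ huπ
    rw [Finset.mem_product, Finset.mem_filter] at huπ
    have hudec : ∀ y, u (winG c hcr y) = winD c hcr u y := by
      apply winD_unique
      rw [← desc_window hcr u]
      intro a ha
      exact huπ.1.2 a (Finset.mem_union_right _ ha)
    set w' := u * winPerm c hcr π with hw'
    have happ : ∀ y, w' (winG c hcr y) = u (winG c hcr (π y)) := by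
      intro y
      rw [hw', Equiv.Perm.mul_apply, winPerm_g hcr π y]
    have hS : winS c hcr w' = winS c hcr u := by
      apply Finset.ext
      intro z
      simp only [winS, Finset.mem_image]
      constructor
      · rintro ⟨y, -, rfl⟩
        exact ⟨π y, Finset.mem_univ _, (happ y).symm⟩
      · rintro ⟨y, -, rfl⟩
        refine ⟨π⁻¹ y, Finset.mem_univ _, ?_⟩
        rw [happ (π⁻¹ y), (by rw [← Equiv.Perm.mul_apply, mul_inv_cancel, Equiv.Perm.one_apply] : π (π⁻¹ y) = y)]
    have hpat : winPat c hcr w' = π := by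
      apply Equiv.ext
      intro y
      have h1 : winD c hcr w' (winPat c hcr w' y) = winD c hcr w' (π y) := by
        rw [winPat_spec hcr w' y, happ y, hudec (π y), winD_congr hcr hS.symm]
      exact (winD_anti hcr w').injective h1
    simp only [hpat]
    have : w' * winPerm c hcr π⁻¹ = u := by
      rw [hw', mul_assoc, winPerm_mul hcr π π⁻¹, mul_inv_cancel, winPerm_one hcr, mul_one]
    rw [Prod.mk.injEq]
    exact ⟨this, rfl⟩
  -- right inverse : i (j w) = w
  · intro w hw
    show w * winPerm c hcr (winPat c hcr w)⁻¹ * winPerm c hcr (winPat c hcr w) = w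
    rw [mul_assoc, winPerm_mul hcr _ _, inv_mul_cancel, winPerm_one hcr, mul_one]

end RunMain

lemma cnt_empty (N : ℕ) : cnt N ∅ = N.factorial := by
  classical
  rw [cnt]
  rw [Finset.filter_true_of_mem (by intro w _; simp)]
  rw [Finset.card_univ]
  simp [Fintype.card_perm]

lemma detEq (N : ℕ) : ∀ (A : Finset ℕ), (∀ a ∈ A, 1 ≤ a ∧ a < N) →
    (cnt N A : ℚ) = (N.factorial : ℚ) * (MatK A).det := by
  classical
  intro A
  induction A using Finset.strongInduction with
  | _ A ih =>
  intro hA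
  by_cases hne : A.Nonempty
  · set m := A.max' hne with hm
    have hmA : m ∈ A := A.max'_mem hne
    have hmax : ∀ a ∈ A, a ≤ m := fun a ha => Finset.le_max' A a ha
    set T := (Finset.range (m+1)).filter (fun j => Finset.Icc (j+1) m ⊆ A) with hT
    have hmT : m ∈ T := by
      rw [hT, Finset.mem_filter, Finset.mem_range]
      refine ⟨by omega, ?_⟩
      intro x hx
      rw [Finset.mem_Icc] at hx
      exact (by omega : False).elim
    have hTne : T.Nonempty := ⟨m, hmT⟩
    set c := T.min' hTne with hc
    have hcT : c ∈ T := T.min'_mem hTne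
    have hcm : c < m + 1 ∧ Finset.Icc (c+1) m ⊆ A := by
      rw [hT, Finset.mem_filter, Finset.mem_range] at hcT
      exact hcT
    have hcA : c ∉ A := by
      intro hcA
      have h1c : 1 ≤ c := (hA c hcA).1
      have hmem : c - 1 ∈ T := by
        rw [hT, Finset.mem_filter, Finset.mem_range]
        refine ⟨by omega, ?_⟩
        intro x hx
        rw [Finset.mem_Icc] at hx
        rcases Nat.eq_or_lt_of_le hx.1 with h | h
        · rw [show x = c by omega]; exact hcA
        · exact hcm.2 (by rw [Finset.mem_Icc]; omega)
      have := T.min'_le _ hmem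
      omega
    have hclt : c < m := by
      rcases Nat.lt_or_ge c m with h | h
      · exact h
      · exfalso; have : c = m := by omega
        exact hcA (this ▸ hmA)
    set r := m - c with hr
    set R := Finset.Icc (c+1) m with hR
    set A' := A.filter (· < c) with hA'
    have hAeq : A = A' ∪ R := by
      ext a
      simp only [hA', hR, Finset.mem_union, Finset.mem_filter, Finset.mem_Icc]
      constructor
      · intro ha
        rcases Nat.lt_or_ge a c with h | h
        · exact Or.inl ⟨ha, h⟩
        · right
          have : a ≠ c := fun hh => hcA (hh ▸ ha)
          exact ⟨by omega, hmax a ha⟩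
      · rintro (⟨ha, _⟩ | ha)
        · exact ha
        · exact hcm.2 (by rw [Finset.mem_Icc]; omega)
    have hA'lt : ∀ b ∈ A', b < c := by
      intro b hb; rw [hA', Finset.mem_filter] at hb; exact hb.2
    have hA'sub : A' ⊂ A := by
      rw [Finset.ssubset_iff_of_subset (Finset.filter_subset _ _)]
      exact ⟨m, hmA, by rw [Finset.mem_filter]; rintro ⟨-, h⟩; omega⟩
    have hcnt : (cnt N A : ℚ) * ((r+1).factorial : ℚ) = (cnt N A' : ℚ) := by
      have h1 := cnt_union_run N c r (by omega) (by have := (hA m hmA).2; omega) A' hA'lt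
      have h2 : A' ∪ Finset.Icc (c+1) (c+r) = A := by
        rw [show c + r = m by omega]
        exact hAeq.symm
      rw [h2] at h1
      exact_mod_cast congrArg (Nat.cast : ℕ → ℚ) h1
    have hdet : (MatK A).det = (MatK A').det * (1 / ((r+1).factorial : ℚ)) := by
      conv_lhs => rw [hAeq]
      rw [det_block A' R (by
        intro b hb a ha
        rw [hR, Finset.mem_Icc] at ha
        have := hA'lt b hb
        omega)]
      congr 1
      rw [show R = Finset.Icc (c+1) (c+r) by rw [hR]; congr 1; omega]
      rw [det_run c r, Tdet r]
    have ih' := ih A' hA'sub (fun a ha => hA a (Finset.filter_subset _ _ ha))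
    have hfact : ((r+1).factorial : ℚ) ≠ 0 := by positivity
    have h5 : (cnt N A : ℚ) = (cnt N A' : ℚ) / ((r+1).factorial : ℚ) := by
      rw [← hcnt, mul_div_assoc, div_self hfact, mul_one]
    rw [h5, ih', hdet]
    ring
  · rw [Finset.not_nonempty_iff_eq_empty] at hne
    subst hne
    rw [cnt_empty]
    haveI : IsEmpty ↥((∅ : Finset ℕ)) := by simp; exact ⟨fun x => x.2⟩
    rw [Matrix.det_isEmpty]
    simp

section ProbBasics

open Filter

variable {n : ℕ}

lemma permProb_eq (q : Equiv.Perm (Fin n) → ℝ) (P : Equiv.Perm (Fin n) → Prop)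
    [DecidablePred P] :
    permProb q P = ∑ σ ∈ Finset.univ.filter P, q σ := by
  rw [permProb, Finset.sum_filter]
  apply Finset.sum_congr rfl
  intro σ _
  simp only [Set.indicator_apply, Set.mem_setOf_eq]

lemma sum_conj_event (q : Equiv.Perm (Fin n) → ℝ)
    (hqinv : ∀ σ ρ : Equiv.Perm (Fin n), q (ρ⁻¹ * σ * ρ) = q σ) (ρ : Equiv.Perm (Fin n))
    (E E' : Finset (Equiv.Perm (Fin n)))
    (hE : ∀ σ, σ ∈ E ↔ ρ⁻¹ * σ * ρ ∈ E') :
    ∑ σ ∈ E, q σ = ∑ σ ∈ E', q σ := by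
  apply Finset.sum_bij' (i := fun σ _ => ρ⁻¹ * σ * ρ) (j := fun σ' _ => ρ * σ' * ρ⁻¹)
  · intro σ hσ
    exact (hE σ).1 hσ
  · intro σ' hσ'
    apply (hE _).2
    have : ρ⁻¹ * (ρ * σ' * ρ⁻¹) * ρ = σ' := by group
    rwa [this]
  · intro σ _
    group
  · intro σ' _
    group
  · intro σ _
    exact (hqinv σ ρ).symm

lemma fix_transfer (q : Equiv.Perm (Fin n) → ℝ)
    (hqinv : ∀ σ ρ : Equiv.Perm (Fin n), q (ρ⁻¹ * σ * ρ) = q σ) (i z : Fin n) :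
    ∑ σ ∈ Finset.univ.filter (fun σ => σ i = i), q σ
      = ∑ σ ∈ Finset.univ.filter (fun σ => σ z = z), q σ := by
  classical
  apply sum_conj_event q hqinv (Equiv.swap z i)
  intro σ
  simp only [Finset.mem_filter, Finset.mem_univ, true_and]
  rw [Equiv.Perm.mul_apply, Equiv.Perm.mul_apply]
  rw [Equiv.swap_inv]
  rw [Equiv.swap_apply_left]
  constructor
  · intro h
    rw [h, Equiv.swap_apply_right]
  · intro h
    have := congrArg (Equiv.swap z i) h
    rwa [Equiv.swap_apply_self, Equiv.swap_apply_left] at this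

lemma offdiag_transfer (q : Equiv.Perm (Fin n) → ℝ)
    (hqinv : ∀ σ ρ : Equiv.Perm (Fin n), q (ρ⁻¹ * σ * ρ) = q σ) (i j j' : Fin n)
    (hj : j ≠ i) (hj' : j' ≠ i) :
    ∑ σ ∈ Finset.univ.filter (fun σ => σ i = j), q σ
      = ∑ σ ∈ Finset.univ.filter (fun σ => σ i = j'), q σ := by
  classical
  apply sum_conj_event q hqinv (Equiv.swap j j')
  intro σ
  simp only [Finset.mem_filter, Finset.mem_univ, true_and]
  rw [Equiv.Perm.mul_apply, Equiv.Perm.mul_apply]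
  rw [Equiv.swap_inv]
  rw [Equiv.swap_apply_of_ne_of_ne (Ne.symm hj) (Ne.symm hj')]
  constructor
  · intro h
    rw [h, Equiv.swap_apply_left]
  · intro h
    have := congrArg (Equiv.swap j j') h
    rwa [Equiv.swap_apply_self, Equiv.swap_apply_right] at this

lemma sum_event_nonneg (q : Equiv.Perm (Fin n) → ℝ) (hq0 : ∀ σ, 0 ≤ q σ)
    (E : Finset (Equiv.Perm (Fin n))) : 0 ≤ ∑ σ ∈ E, q σ :=
  Finset.sum_nonneg fun σ _ => hq0 σ

lemma offdiag_bound (q : Equiv.Perm (Fin n) → ℝ) (hq0 : ∀ σ, 0 ≤ q σ)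
    (hq1 : ∑ σ, q σ = 1)
    (hqinv : ∀ σ ρ : Equiv.Perm (Fin n), q (ρ⁻¹ * σ * ρ) = q σ)
    (hn2 : 2 ≤ n) (i j : Fin n) (hij : j ≠ i) :
    ∑ σ ∈ Finset.univ.filter (fun σ => σ i = j), q σ ≤ 1 / ((n:ℝ) - 1) := by
  classical
  have hparts : ∑ j' : Fin n, ∑ σ ∈ Finset.univ.filter (fun σ => σ i = j'), q σ = 1 := by
    rw [Finset.sum_fiberwise Finset.univ (fun σ => σ i) q]
    exact hq1
  have heach : ∀ j' ∈ Finset.univ.erase i,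
      ∑ σ ∈ Finset.univ.filter (fun σ => σ i = j'), q σ
        = ∑ σ ∈ Finset.univ.filter (fun σ => σ i = j), q σ := by
    intro j' hj'
    rw [Finset.mem_erase] at hj'
    exact offdiag_transfer q hqinv i j' j hj'.1 hij
  have hsub : ∑ j' ∈ Finset.univ.erase i,
      ∑ σ ∈ Finset.univ.filter (fun σ => σ i = j'), q σ ≤ 1 := by
    rw [← hparts]
    apply Finset.sum_le_sum_of_subset_of_nonneg (Finset.subset_univ _)
    intro j' _ _
    exact sum_event_nonneg q hq0 _
  rw [Finset.sum_congr rfl heach, Finset.sum_const] at hsub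
  rw [Finset.card_erase_of_mem (Finset.mem_univ i), Finset.card_univ, Fintype.card_fin] at hsub
  have hcast : ((n - 1 : ℕ) : ℝ) = (n : ℝ) - 1 := by
    have : 1 ≤ n := by omega
    push_cast [this]
    ring
  rw [nsmul_eq_mul, hcast] at hsub
  have hpos : (0:ℝ) < (n:ℝ) - 1 := by
    have : (2:ℝ) ≤ (n:ℝ) := by exact_mod_cast hn2
    linarith
  rw [le_div_iff₀ hpos]
  linarith [hsub]

end ProbBasics

section RhoS

variable {n k : ℕ}

def dEnumS (S : Finset (Fin n)) {k : ℕ} (h : S.card = k) (x : Fin k) : Fin n :=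
  S.orderEmbOfFin h x.rev

lemma dEnumS_inj (S : Finset (Fin n)) (h : S.card = k) : Function.Injective (dEnumS S h) := by
  intro a b hab
  have := (S.orderEmbOfFin h).injective hab
  exact Fin.rev_injective this

lemma dEnumS_mem (S : Finset (Fin n)) (h : S.card = k) (x : Fin k) : dEnumS S h x ∈ S :=
  Finset.orderEmbOfFin_mem _ _ _

def dEquivS (S : Finset (Fin n)) {k : ℕ} (h : S.card = k) : Fin k ≃ {x : Fin n // x ∈ S} :=
  Equiv.ofBijective (fun x => ⟨dEnumS S h x, dEnumS_mem S h x⟩) (by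
    rw [Fintype.bijective_iff_injective_and_card]
    constructor
    · intro a b hab
      exact dEnumS_inj S h (congrArg Subtype.val hab)
    · rw [Fintype.card_coe, h, Fintype.card_fin])

def rhoS (S : Finset (Fin n)) {k : ℕ} (h : S.card = k) (π : Equiv.Perm (Fin k)) :
    Equiv.Perm (Fin n) :=
  π.extendDomain (dEquivS S h)

lemma rhoS_apply_d (S : Finset (Fin n)) (h : S.card = k) (π : Equiv.Perm (Fin k)) (x : Fin k) :
    rhoS S h π (dEnumS S h x) = dEnumS S h (π x) :=
  Equiv.Perm.extendDomain_apply_image π (dEquivS S h) x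

lemma rhoS_out (S : Finset (Fin n)) (h : S.card = k) (π : Equiv.Perm (Fin k)) (x : Fin n)
    (hx : x ∉ S) : rhoS S h π x = x :=
  Equiv.Perm.extendDomain_apply_not_subtype π (dEquivS S h) hx

lemma rhoS_mul (S : Finset (Fin n)) (h : S.card = k) (π π' : Equiv.Perm (Fin k)) :
    rhoS S h π * rhoS S h π' = rhoS S h (π * π') :=
  Equiv.Perm.extendDomain_mul _ _ _

lemma rhoS_one (S : Finset (Fin n)) (h : S.card = k) : rhoS S h 1 = 1 :=
  Equiv.Perm.extendDomain_one _

lemma rhoS_inv (S : Finset (Fin n)) (h : S.card = k) (π : Equiv.Perm (Fin k)) :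
    (rhoS S h π)⁻¹ = rhoS S h π⁻¹ :=
  Equiv.Perm.extendDomain_inv _ _

lemma rhoS_congr {S S' : Finset (Fin n)} (hSS : S = S') (h : S.card = k) (h' : S'.card = k)
    (π : Equiv.Perm (Fin k)) : rhoS S h π = rhoS S' h' π := by
  subst hSS; rfl

lemma dEnumS_congr {S S' : Finset (Fin n)} (hSS : S = S') (h : S.card = k) (h' : S'.card = k) :
    dEnumS S h = dEnumS S' h' := by
  subst hSS; rfl

end RhoS

open scoped Classical in
lemma asc_card (s : ℕ) (A : Finset ℕ) :
    (Finset.univ.filter fun w : Equiv.Perm (Fin s) =>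
        ∀ a ∈ A, ∃ (h1 : a - 1 < s) (h2 : a < s), w ⟨a-1,h1⟩ < w ⟨a,h2⟩).card = cnt s A := by
  unfold cnt
  refine Finset.card_bij' (fun w _ => Fin.revPerm * w) (fun w _ => Fin.revPerm * w)
    ?hi ?hj ?li ?ri
  case hi =>
    intro w hw
    rw [Finset.mem_filter] at hw ⊢
    refine ⟨Finset.mem_univ _, ?_⟩
    intro a ha
    obtain ⟨h1, h2, hlt⟩ := hw.2 a ha
    refine ⟨h1, h2, ?_⟩
    show Fin.rev (w ⟨a, h2⟩) < Fin.rev (w ⟨a-1, h1⟩)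
    exact Fin.rev_lt_rev.2 hlt
  case hj =>
    intro w hw
    rw [Finset.mem_filter] at hw ⊢
    refine ⟨Finset.mem_univ _, ?_⟩
    intro a ha
    obtain ⟨h1, h2, hlt⟩ := hw.2 a ha
    refine ⟨h1, h2, ?_⟩
    show Fin.rev (w ⟨a-1, h1⟩) < Fin.rev (w ⟨a, h2⟩)
    exact Fin.rev_lt_rev.2 hlt
  case li =>
    intro w _
    apply Equiv.ext
    intro x
    show Fin.rev (Fin.rev (w x)) = w x
    exact Fin.rev_rev _
  case ri =>
    intro w _
    apply Equiv.ext
    intro x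
    show Fin.rev (Fin.rev (w x)) = w x
    exact Fin.rev_rev _

lemma sum_union_le_real {β : Type*} [DecidableEq β] (s t : Finset β) (g : β → ℝ)
    (hg : ∀ b, 0 ≤ g b) : ∑ b ∈ s ∪ t, g b ≤ ∑ b ∈ s, g b + ∑ b ∈ t, g b := by
  rw [show s ∪ t = s ∪ (t \ s) by rw [Finset.union_sdiff_self_eq_union],
    Finset.sum_union (Finset.disjoint_sdiff)]
  have : ∑ b ∈ t \ s, g b ≤ ∑ b ∈ t, g b :=
    Finset.sum_le_sum_of_subset_of_nonneg (Finset.sdiff_subset) (fun b _ _ => hg b)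
  linarith

lemma sum_biUnion_le_real {ι β : Type*} [DecidableEq β] (s : Finset ι) (f : ι → Finset β)
    (g : β → ℝ) (hg : ∀ b, 0 ≤ g b) :
    ∑ b ∈ s.biUnion f, g b ≤ ∑ i ∈ s, ∑ b ∈ f i, g b := by
  classical
  induction s using Finset.induction_on with
  | empty => simp
  | insert a s' hx ih =>
    rw [Finset.biUnion_insert, Finset.sum_insert hx]
    calc ∑ b ∈ f a ∪ s'.biUnion f, g b ≤ ∑ b ∈ f a, g b + ∑ b ∈ s'.biUnion f, g b :=
          sum_union_le_real _ _ g hg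
      _ ≤ ∑ b ∈ f a, g b + ∑ i ∈ s', ∑ b ∈ f i, g b := by linarith [ih]

section KeyEst

open scoped Classical

variable {n m : ℕ}

/-- all values on the window `0..m` are `≥ m+1`. -/
def Good (hcr : 0 + m < n) (σ : Equiv.Perm (Fin n)) : Prop :=
  ∀ y : Fin (m+1), m + 1 ≤ ((σ (winG 0 hcr y)) : ℕ)

/-- permutations that are good and have window pattern `w` (w.r.t. decreasing enumeration). -/
def PatF (hcr : 0 + m < n) (w : Equiv.Perm (Fin (m+1))) : Finset (Equiv.Perm (Fin n)) :=
  Finset.univ.filter (fun σ => Good hcr σ ∧ ∀ y, σ (winG 0 hcr y) = winD 0 hcr σ (w y))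

lemma winD_eq_dEnumS (hcr : 0 + m < n) (σ : Equiv.Perm (Fin n)) :
    winD 0 hcr σ = dEnumS (winS 0 hcr σ) (winS_card hcr σ) := rfl

lemma mem_patF_winPat (hcr : 0 + m < n) (σ : Equiv.Perm (Fin n)) (hg : Good hcr σ) :
    σ ∈ PatF hcr (winPat 0 hcr σ) := by
  rw [PatF, Finset.mem_filter]
  exact ⟨Finset.mem_univ _, hg, fun y => (winPat_spec hcr σ y).symm⟩

lemma patF_unique (hcr : 0 + m < n) (w w' : Equiv.Perm (Fin (m+1))) (σ : Equiv.Perm (Fin n))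
    (h1 : σ ∈ PatF hcr w) (h2 : σ ∈ PatF hcr w') : w = w' := by
  rw [PatF, Finset.mem_filter] at h1 h2
  apply Equiv.ext
  intro y
  apply (winD_anti hcr σ).injective
  rw [← h1.2.2 y, ← h2.2.2 y]

lemma good_biUnion (hcr : 0 + m < n) :
    Finset.univ.filter (Good hcr)
      = (Finset.univ : Finset (Equiv.Perm (Fin (m+1)))).biUnion (PatF hcr) := by
  ext σ
  rw [Finset.mem_filter, Finset.mem_biUnion]
  constructor
  · rintro ⟨-, hg⟩
    exact ⟨winPat 0 hcr σ, Finset.mem_univ _, mem_patF_winPat hcr σ hg⟩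
  · rintro ⟨w, -, hσ⟩
    rw [PatF, Finset.mem_filter] at hσ
    exact ⟨Finset.mem_univ _, hσ.2.1⟩

lemma patF_disjoint (hcr : 0 + m < n) :
    (↑(Finset.univ : Finset (Equiv.Perm (Fin (m+1)))) : Set (Equiv.Perm (Fin (m+1)))).PairwiseDisjoint (PatF hcr) := by
  intro w _ w' _ hww
  rw [Function.onFun]
  rw [Finset.disjoint_left]
  intro σ h1 h2
  exact hww (patF_unique hcr w w' σ h1 h2)

lemma winG_not_mem_winS (hcr : 0 + m < n) (σ : Equiv.Perm (Fin n)) (hg : Good hcr σ)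
    (y : Fin (m+1)) : winG 0 hcr y ∉ winS 0 hcr σ := by
  intro hy
  rw [winS, Finset.mem_image] at hy
  obtain ⟨z, -, hz⟩ := hy
  have h1 := hg z
  rw [hz] at h1
  have h2 : ((winG 0 hcr y : Fin n) : ℕ) = 0 + (y:ℕ) := rfl
  have := y.isLt
  omega

lemma patF_apply (hcr : 0 + m < n) (w w' : Equiv.Perm (Fin (m+1))) (σ : Equiv.Perm (Fin n))
    (hσ : σ ∈ PatF hcr w) (y : Fin (m+1)) :
    ((rhoS (winS 0 hcr σ) (winS_card hcr σ) (w'.symm.trans w))⁻¹ * σ *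
      rhoS (winS 0 hcr σ) (winS_card hcr σ) (w'.symm.trans w)) (winG 0 hcr y)
      = winD 0 hcr σ (w' y) := by
  rw [PatF, Finset.mem_filter] at hσ
  obtain ⟨-, hg, hval⟩ := hσ
  rw [Equiv.Perm.mul_apply, Equiv.Perm.mul_apply]
  rw [rhoS_out _ _ _ _ (winG_not_mem_winS hcr σ hg y)]
  rw [hval y]
  rw [rhoS_inv, winD_eq_dEnumS hcr σ, rhoS_apply_d]
  congr 1
  show (w'.symm.trans w)⁻¹ (w y) = w' y
  have : (w'.symm.trans w) (w' y) = w y := by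
    rw [Equiv.trans_apply]
    rw [Equiv.symm_apply_apply]
  rw [← this]
  exact Equiv.symm_apply_apply _ _

lemma mem_winS {c r N : ℕ} (h : c + r < N) (σ : Equiv.Perm (Fin N)) (z : Fin N) :
    z ∈ winS c h σ ↔ ∃ y, σ (winG c h y) = z := by
  simp [winS, Finset.mem_image]

lemma patF_S_eq (hcr : 0 + m < n) (w w' : Equiv.Perm (Fin (m+1))) (σ : Equiv.Perm (Fin n))
    (hσ : σ ∈ PatF hcr w) :
    winS 0 hcr ((rhoS (winS 0 hcr σ) (winS_card hcr σ) (w'.symm.trans w))⁻¹ * σ *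
      rhoS (winS 0 hcr σ) (winS_card hcr σ) (w'.symm.trans w)) = winS 0 hcr σ := by
  have hval : ∀ y, σ (winG 0 hcr y) = winD 0 hcr σ (w y) := by
    rw [PatF, Finset.mem_filter] at hσ
    exact hσ.2.2
  ext z
  rw [mem_winS, mem_winS]
  constructor
  · rintro ⟨y, rfl⟩
    refine ⟨w.symm (w' y), ?_⟩
    rw [hval, Equiv.apply_symm_apply, patF_apply hcr w w' σ hσ y]
  · rintro ⟨y, rfl⟩
    refine ⟨w'.symm (w y), ?_⟩
    rw [patF_apply hcr w w' σ hσ, Equiv.apply_symm_apply, hval]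

lemma patF_move (hcr : 0 + m < n) (w w' : Equiv.Perm (Fin (m+1))) (σ : Equiv.Perm (Fin n))
    (hσ : σ ∈ PatF hcr w) :
    ((rhoS (winS 0 hcr σ) (winS_card hcr σ) (w'.symm.trans w))⁻¹ * σ *
      rhoS (winS 0 hcr σ) (winS_card hcr σ) (w'.symm.trans w)) ∈ PatF hcr w' := by
  have hg : Good hcr σ := by
    rw [PatF, Finset.mem_filter] at hσ
    exact hσ.2.1
  rw [PatF, Finset.mem_filter]
  refine ⟨Finset.mem_univ _, ?_, ?_⟩
  · intro y
    rw [patF_apply hcr w w' σ hσ y]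
    have hmem := winD_mem hcr σ (w' y)
    rw [winS, Finset.mem_image] at hmem
    obtain ⟨z, -, hz⟩ := hmem
    have := hg z
    rw [hz] at this
    exact this
  · intro y
    rw [patF_apply hcr w w' σ hσ y]
    rw [winD_congr hcr (patF_S_eq hcr w w' σ hσ)]

end KeyEst

section KeyEst2

open scoped Classical

variable {n m : ℕ}

lemma patF_mass_eq (hcr : 0 + m < n) (q : Equiv.Perm (Fin n) → ℝ)
    (hqinv : ∀ σ ρ : Equiv.Perm (Fin n), q (ρ⁻¹ * σ * ρ) = q σ)
    (w w' : Equiv.Perm (Fin (m+1))) :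
    ∑ σ ∈ PatF hcr w, q σ = ∑ σ ∈ PatF hcr w', q σ := by
  have hππ' : ∀ a b : Equiv.Perm (Fin (m+1)),
      (a.symm.trans b) * (b.symm.trans a) = 1 := by
    intro a b
    apply Equiv.ext
    intro x
    show (a.symm.trans b) ((b.symm.trans a) x) = x
    simp [Equiv.trans_apply]
  apply Finset.sum_bij'
    (i := fun σ _ => (rhoS (winS 0 hcr σ) (winS_card hcr σ) (w'.symm.trans w))⁻¹ * σ *
      rhoS (winS 0 hcr σ) (winS_card hcr σ) (w'.symm.trans w))
    (j := fun σ _ => (rhoS (winS 0 hcr σ) (winS_card hcr σ) (w.symm.trans w'))⁻¹ * σ *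
      rhoS (winS 0 hcr σ) (winS_card hcr σ) (w.symm.trans w'))
  · intro σ hσ
    exact patF_move hcr w w' σ hσ
  · intro σ hσ
    exact patF_move hcr w' w σ hσ
  · intro σ hσ
    rw [rhoS_congr (patF_S_eq hcr w w' σ hσ) (winS_card hcr _) (winS_card hcr σ)]
    have hmul : rhoS (winS 0 hcr σ) (winS_card hcr σ) (w'.symm.trans w) *
        rhoS (winS 0 hcr σ) (winS_card hcr σ) (w.symm.trans w') = 1 := by
      rw [rhoS_mul, hππ' w' w, rhoS_one]
    have heq : rhoS (winS 0 hcr σ) (winS_card hcr σ) (w.symm.trans w')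
        = (rhoS (winS 0 hcr σ) (winS_card hcr σ) (w'.symm.trans w))⁻¹ :=
      eq_inv_of_mul_eq_one_right hmul
    rw [heq]
    group
  · intro σ hσ
    rw [rhoS_congr (patF_S_eq hcr w' w σ hσ) (winS_card hcr _) (winS_card hcr σ)]
    have hmul : rhoS (winS 0 hcr σ) (winS_card hcr σ) (w.symm.trans w') *
        rhoS (winS 0 hcr σ) (winS_card hcr σ) (w'.symm.trans w) = 1 := by
      rw [rhoS_mul, hππ' w w', rhoS_one]
    have heq : rhoS (winS 0 hcr σ) (winS_card hcr σ) (w'.symm.trans w)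
        = (rhoS (winS 0 hcr σ) (winS_card hcr σ) (w.symm.trans w'))⁻¹ :=
      eq_inv_of_mul_eq_one_right hmul
    rw [heq]
    group
  · intro σ _
    exact (hqinv σ _).symm

lemma patF_desc_iff (hcr : 0 + m < n) (A : Finset ℕ) (hA : ∀ a ∈ A, 1 ≤ a ∧ a ≤ m)
    (w : Equiv.Perm (Fin (m+1))) (σ : Equiv.Perm (Fin n)) (hσ : σ ∈ PatF hcr w) :
    (∀ a ∈ A, descentAt σ a)
      ↔ (∀ a ∈ A, ∃ (h1 : a - 1 < m+1) (h2 : a < m+1), w ⟨a-1,h1⟩ < w ⟨a,h2⟩) := by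
  have hval : ∀ y, σ (winG 0 hcr y) = winD 0 hcr σ (w y) := by
    rw [PatF, Finset.mem_filter] at hσ
    exact hσ.2.2
  constructor
  · intro h a ha
    obtain ⟨ha1, ham⟩ := hA a ha
    obtain ⟨h1, h2, hlt⟩ := h a ha
    refine ⟨by omega, by omega, ?_⟩
    rw [show (⟨a, h2⟩ : Fin n) = winG 0 hcr ⟨a, by omega⟩ from Fin.ext (by
          show a = 0 + a; omega),
        show (⟨a-1, h1⟩ : Fin n) = winG 0 hcr ⟨a-1, by omega⟩ from Fin.ext (by
          show a - 1 = 0 + (a-1); omega),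
        hval, hval] at hlt
    exact (winD_anti hcr σ).lt_iff_gt.1 hlt
  · intro h a ha
    obtain ⟨ha1, ham⟩ := hA a ha
    obtain ⟨h1, h2, hlt⟩ := h a ha
    refine ⟨by omega, by omega, ?_⟩
    rw [show (⟨a, by omega⟩ : Fin n) = winG 0 hcr ⟨a, h2⟩ from Fin.ext (by
          show a = 0 + a; omega),
        show (⟨a-1, by omega⟩ : Fin n) = winG 0 hcr ⟨a-1, h1⟩ from Fin.ext (by
          show a - 1 = 0 + (a-1); omega),
        hval, hval]
    exact (winD_anti hcr σ).lt_iff_gt.2 hlt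

end KeyEst2

open scoped Classical in
lemma key_est (n m : ℕ) (hmn : m + 1 < n) (q : Equiv.Perm (Fin n) → ℝ)
    (hq0 : ∀ σ, 0 ≤ q σ) (hq1 : ∑ σ, q σ = 1)
    (hqinv : ∀ σ ρ : Equiv.Perm (Fin n), q (ρ⁻¹ * σ * ρ) = q σ)
    (A : Finset ℕ) (hA : ∀ a ∈ A, 1 ≤ a ∧ a ≤ m) :
    |permProb q (fun σ => ∀ a ∈ A, descentAt σ a)
        - (cnt (m+1) A : ℝ) / ((m+1).factorial : ℝ)|
      ≤ 2 * ((m+1 : ℝ))^2 *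
          (permProb q (fun σ => ∀ h : 0 < n, σ ⟨0, h⟩ = ⟨0, h⟩) + 1 / ((n:ℝ) - 1)) := by
  have hcr : 0 + m < n := by omega
  have hn0 : 0 < n := by omega
  have hn2 : 2 ≤ n := by omega
  set ff := permProb q (fun σ => ∀ h : 0 < n, σ ⟨0,h⟩ = ⟨0,h⟩) with hff
  have hFz : ff = ∑ σ ∈ Finset.univ.filter (fun σ => σ ⟨0, hn0⟩ = ⟨0, hn0⟩), q σ := by
    rw [hff, permProb_eq]
    apply Finset.sum_congr ?_ (fun _ _ => rfl)
    apply Finset.filter_congr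
    intro σ _
    constructor
    · intro h
      exact h hn0
    · intro h _
      exact h
  have hF0 : 0 ≤ ff := by
    rw [hFz]
    exact sum_event_nonneg q hq0 _
  have hnpos : (0:ℝ) < (n:ℝ) - 1 := by
    have : (2:ℝ) ≤ (n:ℝ) := by exact_mod_cast hn2
    linarith
  have hinv0 : 0 ≤ 1/((n:ℝ)-1) := by positivity
  set c := ∑ σ ∈ PatF hcr (1 : Equiv.Perm (Fin (m+1))), q σ with hcdef
  have hmass : ∀ w, ∑ σ ∈ PatF hcr w, q σ = c := fun w => patF_mass_eq hcr q hqinv w 1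
  have hGood : ∑ σ ∈ Finset.univ.filter (Good hcr), q σ = ((m+1).factorial : ℝ) * c := by
    rw [good_biUnion hcr, Finset.sum_biUnion (patF_disjoint hcr),
      Finset.sum_congr rfl (fun w _ => hmass w), Finset.sum_const, Finset.card_univ,
      Fintype.card_perm, Fintype.card_fin, nsmul_eq_mul]
  have hDG : ∑ σ ∈ Finset.univ.filter
      (fun σ => (∀ a ∈ A, descentAt σ a) ∧ Good hcr σ), q σ = (cnt (m+1) A : ℝ) * c := by
    have hbi : Finset.univ.filter (fun σ : Equiv.Perm (Fin n) =>
          (∀ a ∈ A, descentAt σ a) ∧ Good hcr σ)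
        = (Finset.univ.filter (fun w : Equiv.Perm (Fin (m+1)) =>
            ∀ a ∈ A, ∃ (h1 : a - 1 < m+1) (h2 : a < m+1),
              w ⟨a-1,h1⟩ < w ⟨a,h2⟩)).biUnion (PatF hcr) := by
      ext σ
      rw [Finset.mem_filter, Finset.mem_biUnion]
      constructor
      · rintro ⟨-, hd, hg⟩
        refine ⟨winPat 0 hcr σ, ?_, mem_patF_winPat hcr σ hg⟩
        rw [Finset.mem_filter]
        exact ⟨Finset.mem_univ _,
          (patF_desc_iff hcr A hA _ σ (mem_patF_winPat hcr σ hg)).1 hd⟩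
      · rintro ⟨w, hw, hσ⟩
        rw [Finset.mem_filter] at hw
        have hg : Good hcr σ := by
          rw [PatF, Finset.mem_filter] at hσ
          exact hσ.2.1
        exact ⟨Finset.mem_univ _, (patF_desc_iff hcr A hA w σ hσ).2 hw.2, hg⟩
    rw [hbi, Finset.sum_biUnion ((patF_disjoint hcr).subset
        (Finset.coe_subset.2 (Finset.filter_subset _ _))),
      Finset.sum_congr rfl (fun w _ => hmass w), Finset.sum_const, asc_card (m+1) A,
      nsmul_eq_mul]
  set t := ∑ σ ∈ Finset.univ.filter (fun σ => ¬ Good hcr σ), q σ with htdef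
  have ht0 : 0 ≤ t := sum_event_nonneg q hq0 _
  have htot : ((m+1).factorial : ℝ) * c + t = 1 := by
    rw [← hGood, htdef]
    rw [Finset.sum_filter_add_sum_filter_not Finset.univ (Good hcr) q]
    exact hq1
  -- split descent sum
  have hsplit := Finset.sum_filter_add_sum_filter_not
    (Finset.univ.filter (fun σ : Equiv.Perm (Fin n) => ∀ a ∈ A, descentAt σ a))
    (Good hcr) q
  have hff1 : (Finset.univ.filter (fun σ : Equiv.Perm (Fin n) =>
        ∀ a ∈ A, descentAt σ a)).filter (Good hcr)
      = Finset.univ.filter (fun σ => (∀ a ∈ A, descentAt σ a) ∧ Good hcr σ) :=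
    Finset.filter_filter _ _ _
  set dd := ∑ σ ∈ (Finset.univ.filter (fun σ : Equiv.Perm (Fin n) =>
      ∀ a ∈ A, descentAt σ a)).filter (fun σ => ¬ Good hcr σ), q σ with hdd
  have hdd0 : 0 ≤ dd := sum_event_nonneg q hq0 _
  have hddt : dd ≤ t := by
    apply Finset.sum_le_sum_of_subset_of_nonneg ?_ (fun σ _ _ => hq0 σ)
    intro σ hσ
    rw [Finset.mem_filter] at hσ ⊢
    exact ⟨Finset.mem_univ _, hσ.2⟩
  have hPrD : permProb q (fun σ => ∀ a ∈ A, descentAt σ a) = (cnt (m+1) A : ℝ) * c + dd := by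
    rw [permProb_eq, ← hsplit, hff1, hDG]
  -- bad event bound
  have hbadsub : Finset.univ.filter (fun σ : Equiv.Perm (Fin n) => ¬ Good hcr σ) ⊆
      (Finset.univ : Finset (Fin (m+1) × Fin (m+1))).biUnion (fun xy =>
        Finset.univ.filter (fun σ => σ (winG 0 hcr xy.1) = winG 0 hcr xy.2)) := by
    intro σ hσ
    rw [Finset.mem_filter] at hσ
    have hbad := hσ.2
    simp only [Good, not_forall, not_le] at hbad
    obtain ⟨y, hy⟩ := hbad
    rw [Finset.mem_biUnion]
    refine ⟨(y, ⟨((σ (winG 0 hcr y)) : ℕ), by omega⟩), Finset.mem_univ _, ?_⟩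
    rw [Finset.mem_filter]
    refine ⟨Finset.mem_univ _, ?_⟩
    apply Fin.ext
    show ((σ (winG 0 hcr y)) : ℕ) = 0 + ((σ (winG 0 hcr y)) : ℕ)
    omega
  have hpair : ∀ xy : Fin (m+1) × Fin (m+1),
      ∑ σ ∈ Finset.univ.filter (fun σ : Equiv.Perm (Fin n) =>
        σ (winG 0 hcr xy.1) = winG 0 hcr xy.2), q σ ≤ ff + 1/((n:ℝ)-1) := by
    rintro ⟨x, y⟩
    by_cases hxy : winG 0 hcr y = winG 0 hcr x
    · have heq : ∑ σ ∈ Finset.univ.filter (fun σ : Equiv.Perm (Fin n) =>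
          σ (winG 0 hcr x) = winG 0 hcr y), q σ
          = ∑ σ ∈ Finset.univ.filter (fun σ : Equiv.Perm (Fin n) =>
            σ (winG 0 hcr x) = winG 0 hcr x), q σ := by
        rw [hxy]
      rw [heq, fix_transfer q hqinv (winG 0 hcr x) ⟨0, hn0⟩, ← hFz]
      linarith
    · have hb := offdiag_bound q hq0 hq1 hqinv hn2 (winG 0 hcr x) (winG 0 hcr y) hxy
      simp only []
      linarith
  have hbad : t ≤ ((m+1:ℝ))^2 * (ff + 1/((n:ℝ)-1)) := by
    calc t ≤ ∑ σ ∈ (Finset.univ : Finset (Fin (m+1) × Fin (m+1))).biUnion (fun xy =>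
          Finset.univ.filter (fun σ : Equiv.Perm (Fin n) =>
            σ (winG 0 hcr xy.1) = winG 0 hcr xy.2)), q σ :=
          Finset.sum_le_sum_of_subset_of_nonneg hbadsub (fun σ _ _ => hq0 σ)
      _ ≤ ∑ xy : Fin (m+1) × Fin (m+1), ∑ σ ∈ Finset.univ.filter
            (fun σ : Equiv.Perm (Fin n) => σ (winG 0 hcr xy.1) = winG 0 hcr xy.2), q σ :=
          sum_biUnion_le_real _ _ _ hq0
      _ ≤ ∑ _xy : Fin (m+1) × Fin (m+1), (ff + 1/((n:ℝ)-1)) :=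
          Finset.sum_le_sum (fun xy _ => hpair xy)
      _ = ((m+1:ℝ))^2 * (ff + 1/((n:ℝ)-1)) := by
          rw [Finset.sum_const, Finset.card_univ, Fintype.card_prod, Fintype.card_fin,
            nsmul_eq_mul]
          push_cast
          ring
  -- final arithmetic
  have hfpos : (0:ℝ) < ((m+1).factorial : ℝ) := by
    exact_mod_cast Nat.factorial_pos (m+1)
  set u := (cnt (m+1) A : ℝ) / ((m+1).factorial : ℝ) with hu
  have hu0 : 0 ≤ u := by
    apply div_nonneg _ (le_of_lt hfpos)
    exact_mod_cast Nat.zero_le _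
  have hu1 : u ≤ 1 := by
    rw [hu, div_le_one hfpos]
    have : cnt (m+1) A ≤ (m+1).factorial := by
      rw [cnt]
      calc (Finset.univ.filter fun w : Equiv.Perm (Fin (m+1)) =>
            ∀ a ∈ A, descentAt w a).card ≤ Finset.univ.card := Finset.card_filter_le _ _
        _ = (m+1).factorial := by rw [Finset.card_univ, Fintype.card_perm, Fintype.card_fin]
    exact_mod_cast this
  have hcnteq : (cnt (m+1) A : ℝ) * c = u * (1 - t) := by
    have h6 : u * ((m+1).factorial : ℝ) = (cnt (m+1) A : ℝ) :=
      div_mul_cancel₀ _ (ne_of_gt hfpos)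
    calc (cnt (m+1) A : ℝ) * c = u * (((m+1).factorial : ℝ) * c) := by rw [← h6]; ring
      _ = u * (1 - t) := by rw [show ((m+1).factorial : ℝ) * c = 1 - t by linarith]
  have h7 : permProb q (fun σ => ∀ a ∈ A, descentAt σ a) - u = dd - u * t := by
    rw [hPrD, hcnteq]
    ring
  have hut0 : 0 ≤ u * t := mul_nonneg hu0 ht0
  have hut1 : u * t ≤ t := by
    nlinarith
  rw [h7, abs_le]
  constructor
  · linarith
  · linarith

theorem stmt_15 (p : (n : ℕ) → Equiv.Perm (Fin n) → ℝ)
    (hpos : ∀ n, 1 ≤ n → ∀ σ, 0 ≤ p n σ)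
    (hsum : ∀ n, 1 ≤ n → ∑ σ, p n σ = 1)
    (hinv : ∀ n, 1 ≤ n → ∀ σ ρ : Equiv.Perm (Fin n), p n (ρ⁻¹ * σ * ρ) = p n σ)
    (hfix : Filter.Tendsto
      (fun n => permProb (p n) (fun σ => ∀ h : 0 < n, σ ⟨0, h⟩ = ⟨0, h⟩))
      Filter.atTop (nhds 0)) :
    ∀ A : Finset ℕ, (∀ a ∈ A, 1 ≤ a) →
      Filter.Tendsto (fun n => permProb (p n) (fun σ => ∀ a ∈ A, descentAt σ a))
        Filter.atTop
        (nhds ((Matrix.det (Matrix.of fun i j : A =>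
          k0 (((j : ℕ) : ℤ) - ((i : ℕ) : ℤ))) : ℚ) : ℝ)) := by
  classical
  intro A hA
  set m := A.sup id with hm
  have hAm : ∀ a ∈ A, 1 ≤ a ∧ a ≤ m := fun a ha =>
    ⟨hA a ha, Finset.le_sup (f := id) ha⟩
  have hdet := detEq (m+1) A (fun a ha => ⟨hA a ha, by have := (hAm a ha).2; omega⟩)
  -- the limit in convenient form
  have h2nd : Filter.Tendsto (fun n : ℕ => 1/((n:ℝ)-1)) Filter.atTop (nhds 0) := by
    have h1 : Filter.Tendsto (fun n : ℕ => (n:ℝ) - 1) Filter.atTop Filter.atTop :=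
      Filter.tendsto_atTop_add_const_right Filter.atTop (-1)
        (tendsto_natCast_atTop_atTop (R := ℝ))
    have h2 := h1.inv_tendsto_atTop
    simpa [one_div, Pi.inv_def] using h2
  have hto : Filter.Tendsto (fun n : ℕ =>
      2 * ((m+1:ℝ))^2 * ((permProb (p n) (fun σ => ∀ h : 0 < n, σ ⟨0,h⟩ = ⟨0,h⟩))
        + 1/((n:ℝ)-1))) Filter.atTop (nhds 0) := by
    have := (tendsto_const_nhds (x := (2 * ((m+1:ℝ))^2 : ℝ))
        (f := Filter.atTop (α := ℕ))).mul (hfix.add h2nd)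
    simpa using this
  have main : Filter.Tendsto (fun n => permProb (p n) (fun σ => ∀ a ∈ A, descentAt σ a))
      Filter.atTop (nhds ((cnt (m+1) A : ℝ) / ((m+1).factorial : ℝ))) := by
    rw [← tendsto_sub_nhds_zero_iff]
    apply squeeze_zero_norm' ?_ hto
    rw [Filter.eventually_atTop]
    refine ⟨m + 2, fun n hn => ?_⟩
    rw [Real.norm_eq_abs]
    exact key_est n m (by omega) (p n) (hpos n (by omega)) (hsum n (by omega))
      (hinv n (by omega)) A hAm
  have hLeq : ((Matrix.det (Matrix.of fun i j : A =>
        k0 (((j : ℕ) : ℤ) - ((i : ℕ) : ℤ))) : ℚ) : ℝ)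
      = (cnt (m+1) A : ℝ) / ((m+1).factorial : ℝ) := by
    show (((MatK A).det : ℚ) : ℝ) = _
    have hf : ((m+1).factorial : ℚ) ≠ 0 := by positivity
    have hdet' : (MatK A).det = (cnt (m+1) A : ℚ) / ((m+1).factorial : ℚ) := by
      rw [eq_div_iff hf]
      linarith [hdet]
    rw [hdet']
    push_cast
    ring
  rw [hLeq]
  exact main
end
end

section
/- For each n ≥ 1 let p_n be a probability measure on the symmetric group S_n that is invariant under conjugation, and assume p_n({σ : σ(1)=1}) → 0 as n → ∞. Then lim_{n→∞} E_{p_n}[|D(σ)|]/n = 1/2, where |D(σ)| is the total number of descents of σ. -/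
noncomputable section

open Finset
attribute [local instance] Classical.propDecidable
set_option maxHeartbeats 1000000

section Aux

variable {n : ℕ} {p : Equiv.Perm (Fin n) → ℝ}


lemma conj_reindex (ρ : Equiv.Perm (Fin n)) (f : Equiv.Perm (Fin n) → ℝ) :
    ∑ σ : Equiv.Perm (Fin n), f (ρ⁻¹ * σ * ρ) = ∑ σ, f σ := by
  have := Equiv.sum_comp ((Equiv.mulRight ρ).trans (Equiv.mulLeft ρ⁻¹)) f
  simpa [mul_assoc] using this

lemma fix_eq (hinv : ∀ σ ρ : Equiv.Perm (Fin n), p (ρ⁻¹ * σ * ρ) = p σ) (a b : Fin n) :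
    (∑ σ, if σ a = a then p σ else 0) = ∑ σ, if σ b = b then p σ else 0 := by
  set ρ := Equiv.swap a b with hρ
  rw [← conj_reindex ρ (fun σ => if σ b = b then p σ else 0)]
  refine Finset.sum_congr rfl fun σ _ => ?_
  have h1 : (ρ⁻¹ * σ * ρ) b = ρ (σ a) := by
    simp [hρ, Equiv.Perm.mul_apply, Equiv.swap_apply_right]
  have h2 : (ρ⁻¹ * σ * ρ) b = b ↔ σ a = a := by
    rw [h1]
    constructor
    · intro h
      have : σ a = ρ b := by
        have := congrArg ρ.symm h
        simpa [hρ] using this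
      simpa [hρ, Equiv.swap_apply_right] using this
    · intro h; simp [h, hρ, Equiv.swap_apply_left]
  rw [hinv σ ρ, if_congr h2 rfl rfl]

lemma off_eq (hinv : ∀ σ ρ : Equiv.Perm (Fin n), p (ρ⁻¹ * σ * ρ) = p σ)
    (a b b' : Fin n) (hb : b ≠ a) (hb' : b' ≠ a) :
    (∑ σ, if σ a = b then p σ else 0) = ∑ σ, if σ a = b' then p σ else 0 := by
  set ρ := Equiv.swap b b' with hρ
  rw [← conj_reindex ρ (fun σ => if σ a = b' then p σ else 0)]
  refine Finset.sum_congr rfl fun σ _ => ?_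
  have hρa : ρ a = a := Equiv.swap_apply_of_ne_of_ne (Ne.symm hb) (Ne.symm hb')
  have h1 : (ρ⁻¹ * σ * ρ) a = ρ (σ a) := by
    simp [Equiv.Perm.mul_apply, hρa, hρ, Equiv.swap_inv, Equiv.swap_apply_of_ne_of_ne (Ne.symm hb) (Ne.symm hb')]
  have h2 : (ρ⁻¹ * σ * ρ) a = b' ↔ σ a = b := by
    rw [h1]
    constructor
    · intro h
      have := congrArg ρ.symm h
      simpa [hρ, Equiv.swap_apply_right] using this
    · intro h; simp [h, hρ, Equiv.swap_apply_left]
  rw [hinv σ ρ, if_congr h2 rfl rfl]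

lemma off_le (hpos : ∀ σ, 0 ≤ p σ) (hsum : ∑ σ, p σ = 1)
    (hinv : ∀ σ ρ : Equiv.Perm (Fin n), p (ρ⁻¹ * σ * ρ) = p σ)
    (hn : 2 ≤ n) (a b : Fin n) (hab : b ≠ a) :
    (∑ σ, if σ a = b then p σ else 0) ≤ 1 / ((n : ℝ) - 1) := by
  classical
  set m := ∑ σ, if σ a = b then p σ else 0 with hm
  have hmnonneg : 0 ≤ m := Finset.sum_nonneg fun σ _ => by
    split <;> [exact hpos σ; exact le_rfl]
  have hcard : (univ.erase a).card = n - 1 := by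
    simp [Finset.card_erase_of_mem]
  have hsum1 : ∑ c ∈ univ.erase a, (∑ σ, if σ a = c then p σ else 0)
      = ((n : ℝ) - 1) * m := by
    rw [Finset.sum_congr rfl (fun c hc => off_eq hinv a c b (Finset.ne_of_mem_erase hc) hab)]
    rw [Finset.sum_const, hcard, nsmul_eq_mul]
    congr 1
    have : (1:ℝ) ≤ (n:ℝ) := by exact_mod_cast Nat.one_le_of_lt hn
    push_cast [Nat.cast_sub (by omega : 1 ≤ n)]
    ring
  have hsum2 : ∑ c ∈ univ.erase a, (∑ σ, if σ a = c then p σ else 0) ≤ 1 := by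
    rw [Finset.sum_comm]
    calc ∑ σ : Equiv.Perm (Fin n), ∑ c ∈ univ.erase a, (if σ a = c then p σ else 0)
        ≤ ∑ σ : Equiv.Perm (Fin n), p σ := by
          refine Finset.sum_le_sum fun σ _ => ?_
          rw [Finset.sum_ite_eq (univ.erase a) (σ a) (fun _ => p σ)]
          split <;> [exact le_rfl; exact hpos σ]
      _ = 1 := hsum
  have hpos1 : (0:ℝ) < (n:ℝ) - 1 := by
    have : (2:ℝ) ≤ (n:ℝ) := by exact_mod_cast hn
    linarith
  rw [le_div_iff₀ hpos1]
  calc m * ((n:ℝ) - 1) = ((n:ℝ)-1) * m := by ring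
    _ ≤ 1 := by rw [← hsum1]; exact hsum2

lemma desc_prob (hpos : ∀ σ, 0 ≤ p σ) (hsum : ∑ σ, p σ = 1)
    (hinv : ∀ σ ρ : Equiv.Perm (Fin n), p (ρ⁻¹ * σ * ρ) = p σ)
    (hn : 2 ≤ n) (z : Fin n) (i : ℕ) (hi1 : 1 ≤ i) (hi2 : i < n) :
    |(∑ σ, if descentAt σ i then p σ else 0) - 1/2|
      ≤ 2 * (∑ σ, if σ z = z then p σ else 0) + 2 / ((n:ℝ) - 1) := by
  classical
  set j1 : Fin n := ⟨i - 1, by omega⟩ with hj1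
  set j2 : Fin n := ⟨i, hi2⟩ with hj2
  have hj : j1 ≠ j2 := by simp only [hj1, hj2, Fin.mk.injEq, ne_eq]; omega
  have hdesc : ∀ σ : Equiv.Perm (Fin n), descentAt σ i ↔ σ j2 < σ j1 := by
    intro σ
    constructor
    · rintro ⟨h1, h2, h⟩; exact h
    · intro h; exact ⟨by omega, hi2, h⟩
  have hre : (∑ σ, if descentAt σ i then p σ else 0)
      = ∑ σ, if σ j2 < σ j1 then p σ else 0 :=
    Finset.sum_congr rfl fun σ _ => if_congr (hdesc σ) rfl rfl
  rw [hre]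
  set s : Equiv.Perm (Fin n) := Equiv.swap j1 j2 with hs
  set G : Finset (Equiv.Perm (Fin n)) :=
    univ.filter (fun σ => σ j1 ≠ j1 ∧ σ j1 ≠ j2 ∧ σ j2 ≠ j1 ∧ σ j2 ≠ j2) with hGdef
  -- conjugation by s maps G to itself, exchanging descent/ascent
  have hmem : ∀ σ ∈ G, s * σ * s ∈ G := by
    intro σ hσ
    rw [hGdef, Finset.mem_filter] at hσ ⊢
    obtain ⟨-, h1, h2, h3, h4⟩ := hσ
    have e1 : (s * σ * s) j1 = σ j2 := by
      simp [hs, Equiv.Perm.mul_apply, Equiv.swap_apply_left,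
        Equiv.swap_apply_of_ne_of_ne h3 h4]
    have e2 : (s * σ * s) j2 = σ j1 := by
      simp [hs, Equiv.Perm.mul_apply, Equiv.swap_apply_right,
        Equiv.swap_apply_of_ne_of_ne h1 h2]
    exact ⟨Finset.mem_univ _, by rw [e1]; exact h3, by rw [e1]; exact h4,
      by rw [e2]; exact h1, by rw [e2]; exact h2⟩
  have hps : ∀ σ : Equiv.Perm (Fin n), p (s * σ * s) = p σ := by
    intro σ
    have := hinv σ s
    rwa [Equiv.swap_inv] at this
  have hpair : ∑ σ ∈ G, (if σ j2 < σ j1 then p σ else 0)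
      = ∑ σ ∈ G, (if σ j1 < σ j2 then p σ else 0) := by
    refine Finset.sum_nbij' (fun σ => s * σ * s) (fun σ => s * σ * s)
      hmem hmem ?_ ?_ ?_
    · intro σ hσ
      ext x
      simp [Equiv.Perm.mul_apply, hs, Equiv.swap_apply_self]
    · intro σ hσ
      ext x
      simp [Equiv.Perm.mul_apply, hs, Equiv.swap_apply_self]
    · intro σ hσ
      rw [hGdef, Finset.mem_filter] at hσ
      obtain ⟨-, h1, h2, h3, h4⟩ := hσ
      have e1 : (s * σ * s) j1 = σ j2 := by
        simp [hs, Equiv.Perm.mul_apply, Equiv.swap_apply_left,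
          Equiv.swap_apply_of_ne_of_ne h3 h4]
      have e2 : (s * σ * s) j2 = σ j1 := by
        simp [hs, Equiv.Perm.mul_apply, Equiv.swap_apply_right,
          Equiv.swap_apply_of_ne_of_ne h1 h2]
      rw [e1, e2, hps σ]
  have hdouble : (∑ σ ∈ G, (if σ j2 < σ j1 then p σ else 0)) * 2 = ∑ σ ∈ G, p σ := by
    rw [mul_two]
    nth_rewrite 2 [hpair]
    rw [← Finset.sum_add_distrib]
    refine Finset.sum_congr rfl fun σ _ => ?_
    have hne : σ j2 ≠ σ j1 := fun h => hj (σ.injective h).symm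
    rcases lt_or_gt_of_ne hne with h | h
    · rw [if_pos h, if_neg (by exact not_lt_of_gt h), add_zero]
    · rw [if_neg (by exact not_lt_of_gt h), if_pos h, zero_add]
  set δ : ℝ := ∑ σ ∈ univ \ G, p σ with hδ
  have hδ0 : 0 ≤ δ := Finset.sum_nonneg fun σ _ => hpos σ
  have hGp : ∑ σ ∈ G, p σ = 1 - δ := by
    have := Finset.sum_sdiff (Finset.subset_univ G) (f := p)
    rw [hsum] at this
    linarith
  have hsplit : (∑ σ, if σ j2 < σ j1 then p σ else 0)
      = ∑ σ ∈ G, (if σ j2 < σ j1 then p σ else 0)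
        + ∑ σ ∈ univ \ G, (if σ j2 < σ j1 then p σ else 0) := by
    rw [add_comm, Finset.sum_sdiff (Finset.subset_univ G)]
  set r : ℝ := ∑ σ ∈ univ \ G, (if σ j2 < σ j1 then p σ else 0) with hr
  have hr0 : 0 ≤ r := Finset.sum_nonneg fun σ _ => by
    split <;> [exact hpos σ; exact le_rfl]
  have hrδ : r ≤ δ := Finset.sum_le_sum fun σ _ => by
    split <;> [exact le_rfl; exact hpos σ]
  -- bound on δ
  have hδle : δ ≤ 2 * (∑ σ, if σ z = z then p σ else 0) + 2 / ((n:ℝ) - 1) := by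
    have step1 : δ ≤ ∑ σ : Equiv.Perm (Fin n),
        ((if σ j1 = j1 then p σ else 0) + (if σ j1 = j2 then p σ else 0)
          + (if σ j2 = j1 then p σ else 0) + (if σ j2 = j2 then p σ else 0)) := by
      have sub : δ ≤ ∑ σ ∈ univ \ G,
          ((if σ j1 = j1 then p σ else 0) + (if σ j1 = j2 then p σ else 0)
            + (if σ j2 = j1 then p σ else 0) + (if σ j2 = j2 then p σ else 0)) := by
        refine Finset.sum_le_sum fun σ hσ => ?_
        have hσ' : ¬(σ j1 ≠ j1 ∧ σ j1 ≠ j2 ∧ σ j2 ≠ j1 ∧ σ j2 ≠ j2) := by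
          rw [Finset.mem_sdiff, hGdef, Finset.mem_filter] at hσ
          exact fun h => hσ.2 ⟨Finset.mem_univ _, h⟩
        have hp0 := hpos σ
        have hi1' : (0:ℝ) ≤ (if σ j1 = j1 then p σ else 0) := by split <;> simp [hpos σ]
        have hi2' : (0:ℝ) ≤ (if σ j1 = j2 then p σ else 0) := by split <;> simp [hpos σ]
        have hi3' : (0:ℝ) ≤ (if σ j2 = j1 then p σ else 0) := by split <;> simp [hpos σ]
        have hi4' : (0:ℝ) ≤ (if σ j2 = j2 then p σ else 0) := by split <;> simp [hpos σ]
        by_cases e1 : σ j1 = j1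
        · rw [if_pos e1]; linarith
        by_cases e2 : σ j1 = j2
        · rw [if_pos e2]; linarith
        by_cases e3 : σ j2 = j1
        · rw [if_pos e3]; linarith
        by_cases e4 : σ j2 = j2
        · rw [if_pos e4]; linarith
        · exact absurd ⟨e1, e2, e3, e4⟩ hσ'
      refine sub.trans (Finset.sum_le_sum_of_subset_of_nonneg (Finset.sdiff_subset) ?_)
      intro σ _ _
      have h1 : (0:ℝ) ≤ (if σ j1 = j1 then p σ else 0) := by split <;> simp [hpos σ]
      have h2 : (0:ℝ) ≤ (if σ j1 = j2 then p σ else 0) := by split <;> simp [hpos σ]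
      have h3 : (0:ℝ) ≤ (if σ j2 = j1 then p σ else 0) := by split <;> simp [hpos σ]
      have h4 : (0:ℝ) ≤ (if σ j2 = j2 then p σ else 0) := by split <;> simp [hpos σ]
      linarith
    rw [Finset.sum_add_distrib, Finset.sum_add_distrib, Finset.sum_add_distrib] at step1
    have b1 : (∑ σ, if σ j1 = j1 then p σ else 0) = ∑ σ, if σ z = z then p σ else 0 :=
      fix_eq hinv j1 z
    have b4 : (∑ σ, if σ j2 = j2 then p σ else 0) = ∑ σ, if σ z = z then p σ else 0 :=
      fix_eq hinv j2 z
    have b2 : (∑ σ, if σ j1 = j2 then p σ else 0) ≤ 1 / ((n:ℝ) - 1) :=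
      off_le hpos hsum hinv hn j1 j2 (Ne.symm hj)
    have b3 : (∑ σ, if σ j2 = j1 then p σ else 0) ≤ 1 / ((n:ℝ) - 1) :=
      off_le hpos hsum hinv hn j2 j1 hj
    have : 2 / ((n:ℝ) - 1) = 1 / ((n:ℝ) - 1) + 1 / ((n:ℝ) - 1) := by ring
    rw [this]
    linarith
  -- combine
  have hval : (∑ σ, if σ j2 < σ j1 then p σ else 0) = (1 - δ)/2 + r := by
    rw [hsplit]
    have h2 : ∑ σ ∈ G, (if σ j2 < σ j1 then p σ else 0) = (1 - δ)/2 := by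
      have hd := hdouble
      rw [hGp] at hd
      linarith
    rw [h2]
  rw [hval]
  rw [abs_le]
  constructor <;> [linarith; linarith]

lemma descent_card (σ : Equiv.Perm (Fin n)) :
    (Set.ncard {i : ℕ | descentAt σ i} : ℝ)
      = ∑ i ∈ Finset.Ico 1 n, (if descentAt σ i then (1:ℝ) else 0) := by
  classical
  have hset : {i : ℕ | descentAt σ i}
      = ↑((Finset.Ico 1 n).filter fun i => descentAt σ i) := by
    ext i
    simp only [Set.mem_setOf_eq, Finset.coe_filter, Finset.mem_Ico]
    constructor
    · intro h
      refine ⟨⟨?_, ?_⟩, h⟩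
      · obtain ⟨h1, h2, hlt⟩ := h
        by_contra hcon
        have hi0 : i = 0 := by omega
        subst hi0
        simp at hlt
      · obtain ⟨h1, h2, hlt⟩ := h; exact h2
    · exact fun h => h.2
  rw [hset, Set.ncard_coe_finset, Finset.card_filter]
  push_cast
  rfl

lemma expectation_eq :
    (∑ σ : Equiv.Perm (Fin n), p σ * (Set.ncard {i : ℕ | descentAt σ i} : ℝ))
      = ∑ i ∈ Finset.Ico 1 n, (∑ σ, if descentAt σ i then p σ else 0) := by
  classical
  rw [Finset.sum_comm]
  refine Finset.sum_congr rfl fun σ _ => ?_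
  rw [descent_card σ, Finset.mul_sum]
  refine Finset.sum_congr rfl fun i _ => ?_
  split <;> simp

end Aux

theorem stmt_16 (p : (n : ℕ) → Equiv.Perm (Fin n) → ℝ)
    (hpos : ∀ n, 1 ≤ n → ∀ σ, 0 ≤ p n σ)
    (hsum : ∀ n, 1 ≤ n → ∑ σ, p n σ = 1)
    (hinv : ∀ n, 1 ≤ n → ∀ σ ρ : Equiv.Perm (Fin n), p n (ρ⁻¹ * σ * ρ) = p n σ)
    (hfix : Filter.Tendsto
      (fun n => permProb (p n) (fun σ => ∀ h : 0 < n, σ ⟨0, h⟩ = ⟨0, h⟩))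
      Filter.atTop (nhds 0)) :
    Filter.Tendsto
      (fun n => (∑ σ : Equiv.Perm (Fin n),
          p n σ * (Set.ncard {i : ℕ | descentAt σ i} : ℝ)) / n)
      Filter.atTop (nhds (1 / 2)) := by
  classical
  set ε : ℕ → ℝ := fun n => permProb (p n) (fun σ => ∀ h : 0 < n, σ ⟨0, h⟩ = ⟨0, h⟩) with hε
  set F : ℕ → ℝ := fun n => (∑ σ : Equiv.Perm (Fin n),
      p n σ * (Set.ncard {i : ℕ | descentAt σ i} : ℝ)) / n with hF
  have hεeq : ∀ n, ∀ hn : 0 < n,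
      ε n = ∑ σ : Equiv.Perm (Fin n), if σ ⟨0, hn⟩ = ⟨0, hn⟩ then p n σ else 0 := by
    intro n hn
    rw [hε]
    simp only [permProb]
    refine Finset.sum_congr rfl fun σ _ => ?_
    rw [Set.indicator_apply]
    have : (σ ∈ {σ' : Equiv.Perm (Fin n) | ∀ h : 0 < n, σ' ⟨0, h⟩ = ⟨0, h⟩})
        ↔ σ ⟨0, hn⟩ = ⟨0, hn⟩ := by
      simp only [Set.mem_setOf_eq]
      exact ⟨fun h => h hn, fun h _ => h⟩
    rw [if_congr this rfl rfl]
  have hεnn : ∀ n, 1 ≤ n → 0 ≤ ε n := by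
    intro n hn
    rw [hεeq n hn]
    exact Finset.sum_nonneg fun σ _ => by split <;> simp [hpos n hn σ]
  -- main bound
  have key : ∀ n, 2 ≤ n →
      |F n - 1/2| ≤ 2 * ε n + 2/((n:ℝ)-1) + 1/(2*(n:ℝ)) := by
    intro n hn2
    have hn1 : 1 ≤ n := by omega
    have hnR : (2:ℝ) ≤ (n:ℝ) := by exact_mod_cast hn2
    have hn0 : (0:ℝ) < n := by linarith
    have hz : 0 < n := by omega
    set z : Fin n := ⟨0, hz⟩ with hzdef
    set B : ℝ := 2 * ε n + 2/((n:ℝ)-1) with hB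
    have hB0 : 0 ≤ B := by
      have h2 : (0:ℝ) ≤ 2/((n:ℝ)-1) := by
        apply div_nonneg (by norm_num); linarith
      have := hεnn n hn1
      rw [hB]; linarith
    set E : ℝ := ∑ σ : Equiv.Perm (Fin n),
      p n σ * (Set.ncard {i : ℕ | descentAt σ i} : ℝ) with hE
    have hEeq : E = ∑ i ∈ Finset.Ico 1 n,
        (∑ σ, if descentAt σ i then p n σ else 0) := expectation_eq
    have hPi : ∀ i ∈ Finset.Ico 1 n,
        |(∑ σ, if descentAt σ i then p n σ else 0) - 1/2| ≤ B := by
      intro i hi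
      rw [Finset.mem_Ico] at hi
      have hd := desc_prob (p := p n) (hpos n hn1) (hsum n hn1) (hinv n hn1)
        hn2 z i hi.1 hi.2
      rw [hB, hεeq n hz]
      exact hd
    have hcard : (Finset.Ico 1 n).card = n - 1 := by simp
    have hcast : ((n - 1 : ℕ) : ℝ) = (n:ℝ) - 1 := by
      rw [Nat.cast_sub hn1]; norm_num
    have hEbd : |E - ((n:ℝ)-1)/2| ≤ ((n:ℝ)-1) * B := by
      have hsub : E - ((n:ℝ)-1)/2
          = ∑ i ∈ Finset.Ico 1 n,
            ((∑ σ, if descentAt σ i then p n σ else 0) - 1/2) := by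
        rw [Finset.sum_sub_distrib, Finset.sum_const, hcard, ← hEeq,
          nsmul_eq_mul, hcast]
        ring
      rw [hsub]
      calc |∑ i ∈ Finset.Ico 1 n,
            ((∑ σ, if descentAt σ i then p n σ else 0) - 1/2)|
          ≤ ∑ i ∈ Finset.Ico 1 n,
            |(∑ σ, if descentAt σ i then p n σ else 0) - 1/2| :=
            Finset.abs_sum_le_sum_abs _ _
        _ ≤ ∑ _i ∈ Finset.Ico 1 n, B := Finset.sum_le_sum hPi
        _ = ((n:ℝ)-1) * B := by
            rw [Finset.sum_const, hcard, nsmul_eq_mul, hcast]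
    have habs : |E - (n:ℝ)/2| ≤ ((n:ℝ)-1) * B + 1/2 := by
      have h1 : |E - (n:ℝ)/2| ≤ |E - ((n:ℝ)-1)/2| + |((n:ℝ)-1)/2 - (n:ℝ)/2| :=
        abs_sub_le _ _ _
      have h2 : |((n:ℝ)-1)/2 - (n:ℝ)/2| = 1/2 := by
        have : ((n:ℝ)-1)/2 - (n:ℝ)/2 = -(1/2) := by ring
        rw [this, abs_neg, abs_of_pos] ; norm_num
      linarith
    have hFe : F n - 1/2 = (E - (n:ℝ)/2)/n := by
      simp only [hF]
      rw [← hE]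
      field_simp
    rw [show 2 * ε n + 2/((n:ℝ)-1) + 1/(2*(n:ℝ)) = B + 1/(2*(n:ℝ)) from rfl]
    rw [hFe, abs_div, abs_of_pos hn0, div_le_iff₀ hn0]
    have hexp : (B + 1/(2*(n:ℝ))) * n = B * n + 1/2 := by
      field_simp
    rw [hexp]
    have hstep : ((n:ℝ) - 1) * B ≤ (n:ℝ) * B :=
      mul_le_mul_of_nonneg_right (by linarith) hB0
    have hcomm : (n:ℝ) * B = B * (n:ℝ) := mul_comm _ _
    exact habs.trans (add_le_add_left (hstep.trans_eq hcomm) _)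
  -- limit of the bound
  have hg : Filter.Tendsto (fun n : ℕ => 2 * ε n + 2/((n:ℝ)-1) + 1/(2*(n:ℝ)))
      Filter.atTop (nhds 0) := by
    have h1 : Filter.Tendsto (fun n => 2 * ε n) Filter.atTop (nhds 0) := by
      have := hfix.const_mul (2:ℝ)
      simpa using this
    have h2 : Filter.Tendsto (fun n : ℕ => 2/((n:ℝ)-1)) Filter.atTop (nhds 0) := by
      apply Filter.Tendsto.div_atTop (tendsto_const_nhds)
      have := Filter.tendsto_atTop_add_const_right Filter.atTop (-1 : ℝ)
        tendsto_natCast_atTop_atTop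
      simpa [sub_eq_add_neg] using this
    have h3 : Filter.Tendsto (fun n : ℕ => 1/(2*(n:ℝ))) Filter.atTop (nhds 0) := by
      apply Filter.Tendsto.div_atTop (tendsto_const_nhds)
      exact Filter.Tendsto.const_mul_atTop (by norm_num) tendsto_natCast_atTop_atTop
    simpa using (h1.add h2).add h3
  have hsq : Filter.Tendsto (fun n => F n - 1/2) Filter.atTop (nhds 0) := by
    apply squeeze_zero_norm' ?_ hg
    filter_upwards [Filter.eventually_ge_atTop 2] with n hn
    simpa [Real.norm_eq_abs] using key n hn
  exact tendsto_sub_nhds_zero_iff.mp hsq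
end
end

section
/- For n ≥ 1 let π_n : S_{n+1} → S_n be the projection defined by π_n(σ)(i) = σ(i) if σ(i) ≠ n+1 and π_n(σ)(i) = σ(n+1) if σ(i) = n+1, for i ∈ {1,…,n} (removal of n+1 from the cycle structure). Then: (a) for every σ ∈ S_{n+1}, #(π_n(σ)) = #(σ) − 1 if σ(n+1) = n+1 and #(π_n(σ)) = #(σ) otherwise; (b) if (p_n)_{n≥1} is a sequence of probability measures, p_n on S_n, such that each p_n is invariant under conjugation and p_n is the pushforward of p_{n+1} under π_n for every n ≥ 1, then E_{p_n}[#(σ)] = Σ_{i=1}^{n} p_i({σ ∈ S_i : σ(1)=1}) for every n ≥ 1. -/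
noncomputable section

/-- #(σ): number of cycles of `σ`, fixed points counted as cycles. -/
def numCycles {n : ℕ} (σ : Equiv.Perm (Fin n)) : ℕ :=
  σ.cycleType.card + (Finset.univ.filter fun x => σ x = x).card

namespace Stmt19Aux

open Equiv Equiv.Perm Finset

variable {β : Type*} [DecidableEq β] [Fintype β]

/-- number of cycles, fixed points included, via support complement. -/
def nc (g : Perm β) : ℕ := g.cycleType.card + (Fintype.card β - g.support.card)

lemma nc_swap_mul (g : Perm β) (x : β) (hx : g x ≠ x) :
    nc (Equiv.swap x (g x) * g) = nc g + 1 := by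
  classical
  have hsle : g.support.card ≤ Fintype.card β := Finset.card_le_univ _
  by_cases h2 : g (g x) = x
  · -- 2-cycle case
    set g' := Equiv.swap x (g x) * g with hg'
    have hgg : g = Equiv.swap x (g x) * g' := by
      rw [hg', ← mul_assoc, Equiv.swap_mul_self, one_mul]
    have hg'x : g' x = x := by simp [hg', h2, Equiv.swap_apply_right]
    have hg'gx : g' (g x) = g x := by simp [hg', h2]
    have hdisj : Disjoint (Equiv.swap x (g x)) g' := by
      intro y
      by_cases hy1 : y = x
      · right; rw [hy1]; exact hg'x
      by_cases hy2 : y = g x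
      · right; rw [hy2]; exact hg'gx
      · left; exact Equiv.swap_apply_of_ne_of_ne hy1 hy2
    have hcycsw : (Equiv.swap x (g x)).cycleType = {2} := by
      rw [(isCycle_swap (Ne.symm hx)).cycleType, card_support_swap (Ne.symm hx)]
    have hct : g.cycleType = {2} + g'.cycleType := by
      rw [hgg, hdisj.cycleType_mul, hcycsw]
    have hsupp : g.support = (Equiv.swap x (g x)).support ∪ g'.support := by
      conv_lhs => rw [hgg]
      exact hdisj.support_mul
    have hsc : g.support.card = 2 + g'.support.card := by
      rw [hsupp, Finset.card_union_of_disjoint hdisj.disjoint_support,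
        card_support_swap (Ne.symm hx)]
    have h1 : g'.cycleType.card + 1 = g.cycleType.card := by
      rw [hct]; simp [add_comm]
    unfold nc
    omega
  · -- long cycle case
    have hc : (g.cycleOf x).IsCycle := isCycle_cycleOf g hx
    set c := g.cycleOf x with hcdef
    have hcx : c x = g x := cycleOf_apply_self g x
    have hcgx : c (g x) = g (g x) := by
      rw [hcdef, cycleOf_apply, if_pos ⟨1, by simp⟩]
    set d := c⁻¹ * g with hddef
    have hgd : g = c * d := by rw [hddef, ← mul_assoc, mul_inv_cancel, one_mul]
    have hdisj : Disjoint c d := by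
      intro y
      by_cases hy : g.SameCycle x y
      · right
        have : c y = g y := by rw [hcdef, cycleOf_apply, if_pos hy]
        rw [hddef]
        simp only [Perm.mul_apply]
        exact (congrArg (⇑c⁻¹) this).symm.trans (Equiv.symm_apply_apply c y)
      · left
        exact cycleOf_apply_of_not_sameCycle hy
    set c' := Equiv.swap x (g x) * c with hc'def
    have hccx : c (c x) ≠ x := by rw [hcx, hcgx]; exact h2
    have hc' : c'.IsCycle := by
      have := hc.swap_mul (x := x) (by rw [hcx]; exact hx) hccx
      rwa [hcx] at this
    have hdisj' : Disjoint c' d := by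
      intro y
      rcases hdisj y with hcy | hdy
      · left
        have hyx : y ≠ x := by rintro rfl; rw [hcx] at hcy; exact hx hcy
        have hygx : y ≠ g x := by
          rintro rfl; rw [hcgx] at hcy; exact hx (g.injective hcy)
        rw [hc'def]
        simp only [Perm.mul_apply]
        rw [hcy, Equiv.swap_apply_of_ne_of_ne hyx hygx]
      · right; exact hdy
    have hg' : Equiv.swap x (g x) * g = c' * d := by
      rw [hc'def, mul_assoc, ← hgd]
    have hctc : c.cycleType.card = 1 := by rw [hc.cycleType]; rfl
    have hctc' : c'.cycleType.card = 1 := by rw [hc'.cycleType]; rfl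
    have hcteq : (Equiv.swap x (g x) * g).cycleType.card = g.cycleType.card := by
      rw [hg', hdisj'.cycleType_mul, hgd, hdisj.cycleType_mul]
      simp [hctc, hctc']
    have hsupp : (Equiv.swap x (g x) * g).support = g.support \ {x} := by
      exact support_swap_mul_eq g x h2
    have hxs : x ∈ g.support := mem_support.2 hx
    have hscard : (Equiv.swap x (g x) * g).support.card = g.support.card - 1 := by
      rw [hsupp, Finset.sdiff_singleton_eq_erase, Finset.card_erase_of_mem hxs]
    have hs1 : 1 ≤ g.support.card := Finset.card_pos.2 ⟨x, hxs⟩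
    unfold nc
    omega

lemma numCycles_eq_nc {n : ℕ} (σ : Perm (Fin n)) : numCycles σ = nc σ := by
  unfold numCycles nc
  congr 1
  have h := Finset.card_filter_add_card_filter_not
    (s := (Finset.univ : Finset (Fin n))) (p := fun x => σ x = x)
  have hsupp : σ.support = Finset.univ.filter fun x => ¬ σ x = x := rfl
  have hle : σ.support.card ≤ n := by
    exact le_trans (Finset.card_le_univ _) (by simp)
  rw [hsupp, Fintype.card_fin]
  simp only [Finset.card_univ, Fintype.card_fin] at h
  rw [hsupp] at hle
  omega

/-- `Fin n ≃ {x : Fin (n+1) // x ≠ last}` via `castSucc`. -/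
def lastEquiv (n : ℕ) : Fin n ≃ {x : Fin (n + 1) // x ≠ Fin.last n} where
  toFun i := ⟨i.castSucc, (Fin.castSucc_lt_last i).ne⟩
  invFun x := (x.1).castPred x.2
  left_inv i := by simp
  right_inv x := by simp

lemma nc_extendDomain {n : ℕ} (τ : Perm (Fin n)) :
    nc (τ.extendDomain (lastEquiv n)) = nc τ + 1 := by
  unfold nc
  rw [cycleType_extendDomain, support_extend_domain, Finset.card_map,
    Fintype.card_fin, Fintype.card_fin]
  have hle : τ.support.card ≤ n := by
    exact le_trans (Finset.card_le_univ _) (by simp)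
  omega

section Decomp

variable (proj : (n : ℕ) → Equiv.Perm (Fin (n + 1)) → Equiv.Perm (Fin n))
  (hproj : ∀ (n : ℕ) (σ : Equiv.Perm (Fin (n + 1))) (i : Fin n),
      Fin.castSucc (proj n σ i) =
        if σ (Fin.castSucc i) = Fin.last n then σ (Fin.last n) else σ (Fin.castSucc i))

include hproj

lemma decomp (n : ℕ) (σ : Perm (Fin (n + 1))) :
    σ = Equiv.swap (Fin.last n) (σ (Fin.last n)) *
      (proj n σ).extendDomain (lastEquiv n) := by
  apply Equiv.ext
  intro x
  simp only [Perm.mul_apply]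
  by_cases hx : x = Fin.last n
  · subst hx
    rw [Perm.extendDomain_apply_not_subtype _ _ (by simp), Equiv.swap_apply_left]
  · have hex : (proj n σ).extendDomain (lastEquiv n) x
        = if σ x = Fin.last n then σ (Fin.last n) else σ x := by
      rw [Perm.extendDomain_apply_subtype (proj n σ) (lastEquiv n) hx]
      have h0 : ((lastEquiv n) ((proj n σ) ((lastEquiv n).symm ⟨x, hx⟩)) : Fin (n + 1))
          = Fin.castSucc ((proj n σ) (x.castPred hx)) := rfl
      rw [h0, hproj, Fin.castSucc_castPred]
    rw [hex]
    by_cases hs : σ x = Fin.last n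
    · rw [if_pos hs, Equiv.swap_apply_right]; exact hs
    · rw [if_neg hs]
      have h1 : σ x ≠ σ (Fin.last n) := fun h => hx (σ.injective h)
      exact (Equiv.swap_apply_of_ne_of_ne hs h1).symm

lemma nc_proj_fixed (n : ℕ) (σ : Perm (Fin (n + 1)))
    (hfix : σ (Fin.last n) = Fin.last n) : nc σ = nc (proj n σ) + 1 := by
  have h := decomp proj hproj n σ
  rw [hfix] at h
  rw [show Equiv.swap (Fin.last n) (Fin.last n) = 1 from Equiv.swap_self _, one_mul] at h
  conv_lhs => rw [h]
  rw [nc_extendDomain]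

lemma nc_proj_not_fixed (n : ℕ) (σ : Perm (Fin (n + 1)))
    (hfix : σ (Fin.last n) ≠ Fin.last n) : nc (proj n σ) = nc σ := by
  have h := decomp proj hproj n σ
  have h2 : Equiv.swap (Fin.last n) (σ (Fin.last n)) * σ
      = (proj n σ).extendDomain (lastEquiv n) := by
    nth_rewrite 2 [h]
    rw [← mul_assoc, Equiv.swap_mul_self, one_mul]
  have h3 := nc_swap_mul σ (Fin.last n) hfix
  rw [h2, nc_extendDomain] at h3
  omega

end Decomp

lemma sum_indicator_eq {γ : Type*} [Fintype γ] (f : γ → ℝ) (Q : γ → Prop) [DecidablePred Q] :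
    ∑ x, Set.indicator {y | Q y} f x = ∑ x ∈ Finset.univ.filter Q, f x := by
  rw [Finset.sum_filter]
  refine Finset.sum_congr rfl fun x _ => ?_
  by_cases h : Q x
  · rw [if_pos h]
    exact Set.indicator_of_mem (Set.mem_setOf.2 h) f
  · rw [if_neg h]
    exact Set.indicator_of_notMem (fun hc => h (Set.mem_setOf.1 hc)) f

end Stmt19Aux

open Stmt19Aux in
theorem stmt_19
    -- `proj n : S_{n+1} → S_n` is the projection removing `n+1` from the cycle structure:
    -- `π_n(σ)(i) = σ(i)` if `σ(i) ≠ n+1`, and `π_n(σ)(i) = σ(n+1)` if `σ(i) = n+1`.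
    (proj : (n : ℕ) → Equiv.Perm (Fin (n + 1)) → Equiv.Perm (Fin n))
    (hproj : ∀ (n : ℕ) (σ : Equiv.Perm (Fin (n + 1))) (i : Fin n),
      Fin.castSucc (proj n σ i) =
        if σ (Fin.castSucc i) = Fin.last n then σ (Fin.last n) else σ (Fin.castSucc i)) :
    -- (a)
    (∀ (n : ℕ) (σ : Equiv.Perm (Fin (n + 1))),
      (σ (Fin.last n) = Fin.last n → numCycles (proj n σ) = numCycles σ - 1) ∧
      (σ (Fin.last n) ≠ Fin.last n → numCycles (proj n σ) = numCycles σ)) ∧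
    -- (b)
    (∀ p : (n : ℕ) → Equiv.Perm (Fin n) → ℝ,
      (∀ n, 1 ≤ n → ∀ σ, 0 ≤ p n σ) →
      (∀ n, 1 ≤ n → ∑ σ, p n σ = 1) →
      (∀ n, 1 ≤ n → ∀ σ ρ : Equiv.Perm (Fin n), p n (ρ⁻¹ * σ * ρ) = p n σ) →
      -- `p n` is the pushforward of `p (n+1)` under `proj n`
      (∀ n, 1 ≤ n → ∀ τ : Equiv.Perm (Fin n),
        p n τ = ∑ σ : Equiv.Perm (Fin (n + 1)),
          Set.indicator {σ' | proj n σ' = τ} (p (n + 1)) σ) →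
      ∀ n, 1 ≤ n →
        ∑ σ : Equiv.Perm (Fin n), p n σ * (numCycles σ : ℝ) =
          ∑ i ∈ Finset.Icc 1 n,
            permProb (p i) (fun σ : Equiv.Perm (Fin i) => ∀ h : 0 < i, σ ⟨0, h⟩ = ⟨0, h⟩)) := by
  classical
  constructor
  · intro n σ
    constructor
    · intro hfix
      have h := nc_proj_fixed proj hproj n σ hfix
      rw [numCycles_eq_nc, numCycles_eq_nc]
      omega
    · intro hfix
      have h := nc_proj_not_fixed proj hproj n σ hfix
      rw [numCycles_eq_nc, numCycles_eq_nc]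
      exact h
  · intro p hpos hsum hconj hpush n hn
    induction n, hn using Nat.le_induction with
    | base =>
      have h1 : ∀ σ : Equiv.Perm (Fin 1), numCycles σ = 1 := by
        intro σ
        have hσ : σ = 1 := Subsingleton.elim σ 1
        subst hσ
        simp [numCycles]
      rw [Finset.Icc_self, Finset.sum_singleton]
      unfold permProb
      have h2 : ∀ σ : Equiv.Perm (Fin 1),
          Set.indicator {σ' : Equiv.Perm (Fin 1) | ∀ h : 0 < 1, σ' ⟨0, h⟩ = ⟨0, h⟩}
            (p 1) σ = p 1 σ := by
        intro σ
        apply Set.indicator_of_mem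
        intro h
        exact Subsingleton.elim _ _
      rw [Finset.sum_congr rfl (fun σ _ => h2 σ)]
      refine Finset.sum_congr rfl fun σ _ => ?_
      rw [h1 σ]
      simp
    | succ n hn ih =>
      -- split the number of cycles
      have hsplit : ∀ σ : Equiv.Perm (Fin (n + 1)), (numCycles σ : ℝ) =
          (numCycles (proj n σ) : ℝ) +
            (if σ (Fin.last n) = Fin.last n then (1 : ℝ) else 0) := by
        intro σ
        by_cases hfix : σ (Fin.last n) = Fin.last n
        · rw [if_pos hfix]
          have h := nc_proj_fixed proj hproj n σ hfix
          rw [numCycles_eq_nc, numCycles_eq_nc, h]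
          push_cast
          ring
        · rw [if_neg hfix, add_zero]
          rw [numCycles_eq_nc, numCycles_eq_nc, nc_proj_not_fixed proj hproj n σ hfix]
      -- the fiberwise sum for the first part
      have hA : ∑ σ : Equiv.Perm (Fin (n + 1)), p (n + 1) σ * (numCycles (proj n σ) : ℝ)
          = ∑ τ : Equiv.Perm (Fin n), p n τ * (numCycles τ : ℝ) := by
        rw [← Finset.sum_fiberwise_of_maps_to (g := proj n)
          (fun σ _ => Finset.mem_univ _)
          (f := fun σ => p (n + 1) σ * (numCycles (proj n σ) : ℝ))]
        refine Finset.sum_congr rfl fun τ _ => ?_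
        have hstep : ∀ σ ∈ Finset.univ.filter (fun σ => proj n σ = τ),
            p (n + 1) σ * (numCycles (proj n σ) : ℝ) = p (n + 1) σ * (numCycles τ : ℝ) := by
          intro σ hσ
          rw [(Finset.mem_filter.1 hσ).2]
        rw [Finset.sum_congr rfl hstep, ← Finset.sum_mul]
        congr 1
        rw [hpush n hn τ, sum_indicator_eq]
      -- the conjugation invariance for the second part
      have hB : ∑ σ : Equiv.Perm (Fin (n + 1)),
            (if σ (Fin.last n) = Fin.last n then p (n + 1) σ else 0)
          = ∑ σ : Equiv.Perm (Fin (n + 1)), (if σ 0 = 0 then p (n + 1) σ else 0) := by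
        set ρ := Equiv.swap (0 : Fin (n + 1)) (Fin.last n) with hρ
        have hρinv : ρ⁻¹ = ρ := Equiv.swap_inv _ _
        refine (Fintype.sum_equiv ((Equiv.mulLeft ρ).trans (Equiv.mulRight ρ⁻¹))
          _ _ ?_).symm
        intro σ
        have he : ((Equiv.mulLeft ρ).trans (Equiv.mulRight ρ⁻¹)) σ = ρ * σ * ρ⁻¹ := rfl
        rw [he]
        have happ : (ρ * σ * ρ⁻¹) (Fin.last n) = ρ (σ 0) := by
          rw [hρinv]
          simp only [Equiv.Perm.mul_apply]
          rw [hρ, Equiv.swap_apply_right]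
        have hcond : (ρ * σ * ρ⁻¹) (Fin.last n) = Fin.last n ↔ σ 0 = 0 := by
          rw [happ]
          conv_lhs => rw [show Fin.last n = ρ 0 from (Equiv.swap_apply_left _ _).symm]
          exact EmbeddingLike.apply_eq_iff_eq ρ
        have hp : p (n + 1) (ρ * σ * ρ⁻¹) = p (n + 1) σ := by
          have h := hconj (n + 1) (by omega) (ρ * σ * ρ⁻¹) ρ
          have hgrp : ρ⁻¹ * (ρ * σ * ρ⁻¹) * ρ = σ := by group
          rw [hgrp] at h
          exact h.symm
        by_cases h0 : σ 0 = 0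
        · rw [if_pos h0, if_pos (hcond.2 h0), hp]
        · rw [if_neg h0, if_neg (fun hc => h0 (hcond.1 hc))]
      -- identify the permProb term
      have hPP : permProb (p (n + 1))
            (fun σ : Equiv.Perm (Fin (n + 1)) => ∀ h : 0 < n + 1, σ ⟨0, h⟩ = ⟨0, h⟩)
          = ∑ σ : Equiv.Perm (Fin (n + 1)), (if σ 0 = 0 then p (n + 1) σ else 0) := by
        unfold permProb
        refine Finset.sum_congr rfl fun σ _ => ?_
        by_cases h : σ 0 = 0
        · rw [if_pos h]
          apply Set.indicator_of_mem
          intro _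
          simpa using h
        · rw [if_neg h]
          apply Set.indicator_of_notMem
          intro hmem
          exact h (by simpa using hmem (Nat.succ_pos n))
      calc ∑ σ : Equiv.Perm (Fin (n + 1)), p (n + 1) σ * (numCycles σ : ℝ)
          = ∑ σ : Equiv.Perm (Fin (n + 1)),
              (p (n + 1) σ * (numCycles (proj n σ) : ℝ) +
                (if σ (Fin.last n) = Fin.last n then p (n + 1) σ else 0)) := by
            refine Finset.sum_congr rfl fun σ _ => ?_
            rw [hsplit σ, mul_add, mul_ite, mul_one, mul_zero]
        _ = (∑ σ : Equiv.Perm (Fin (n + 1)), p (n + 1) σ * (numCycles (proj n σ) : ℝ))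
              + ∑ σ : Equiv.Perm (Fin (n + 1)),
                  (if σ (Fin.last n) = Fin.last n then p (n + 1) σ else 0) :=
            Finset.sum_add_distrib
        _ = (∑ τ : Equiv.Perm (Fin n), p n τ * (numCycles τ : ℝ))
              + permProb (p (n + 1))
                  (fun σ : Equiv.Perm (Fin (n + 1)) =>
                    ∀ h : 0 < n + 1, σ ⟨0, h⟩ = ⟨0, h⟩) := by
            rw [hA, hB, hPP]
        _ = ∑ i ∈ Finset.Icc 1 (n + 1),
              permProb (p i) (fun σ : Equiv.Perm (Fin i) =>
                ∀ h : 0 < i, σ ⟨0, h⟩ = ⟨0, h⟩) := by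
            rw [ih, ← Finset.sum_Icc_succ_top (by omega : 1 ≤ n + 1)]
end
end
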